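/- arXiv:2408.07312 — 4 statements merged into one kernel-verified Lean document; each statement's English description precedes it below -/
import Mathlib

section
/- For every i ∈ I the braid symmetry T_i satisfies: (i) D̄ ∘ T_i = T_i ∘ D̄; (ii) T_i^⋆ = ⋆ ∘ T_i ∘ ⋆; (iii) T_i ∘ bar = bar ∘ T_i; (iv) T_i ∘ c = c ∘ T_i; (v) wt(T_i x) = s_i(wt(x)) for every homogeneous x ∈ Â, where s_i(λ) = λ − ⟨h_i,λ⟩α_i; (vi) T_i(Â[a,b]) ⊆ Â[a,b+1] and T_i^⋆(Â[a,b]) ⊆ Â[a−1,b] for all a ≤ b. -/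
noncomputable section
open scoped Classical
open Finset

/-! ## The base field `k = ℚ(q^{1/2})` -/

/-- The base field `k = ℚ(q^{1/2})`, realized as the field of rational functions over `ℚ`
in the variable `vv`, which plays the role of the formal square root `q^{1/2}`. -/
abbrev kk : Type := RatFunc ℚ

/-- The formal square root `q^{1/2}`. -/
def vv : kk := RatFunc.X

/-- The quantum parameter `q = (q^{1/2})^2`. -/
def qq : kk := vv ^ 2

/-- The quantum integer `[n]_t = t^{n-1} + t^{n-3} + ⋯ + t^{1-n}`. -/
def qint (t : kk) (n : ℕ) : kk := ∑ k ∈ Finset.range n, t ^ ((n : ℤ) - 1 - 2 * (k : ℤ))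

/-- The quantum factorial `[n]_t!`. -/
def qfact (t : kk) (n : ℕ) : kk := ∏ s ∈ Finset.range n, qint t (s + 1)

/-- The quantum binomial coefficient `[m choose k]_t`. -/
def qbinom (t : kk) (m k : ℕ) : kk := qfact t m / (qfact t k * qfact t (m - k))

/-! ## Cartan data -/

/-- A symmetrizable generalized Cartan matrix together with symmetrizers. -/
structure CartanDatum (I : Type) [Fintype I] [DecidableEq I] where
  c : I → I → ℤ
  d : I → ℤ
  d_pos : ∀ i, 0 < d i
  c_diag : ∀ i, c i i = 2
  c_offdiag : ∀ i j, i ≠ j → c i j ≤ 0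
  symm : ∀ i j, d i * c i j = d j * c j i

variable {I : Type} [Fintype I] [DecidableEq I]

/-- The simple root `α_i` as an element of the root lattice `Q = I → ℤ`. -/
def alphaF (i : I) : I → ℤ := fun j => if j = i then 1 else 0

/-- The symmetric bilinear form on the root lattice, `(α_i, α_j) = d_i c_{ij}`. -/
def CartanDatum.form (A : CartanDatum I) (α β : I → ℤ) : ℤ :=
  ∑ i, ∑ j, α i * (A.d i * A.c i j) * β j

/-- `q_i = q^{d_i}`. -/
def qi (A : CartanDatum I) (i : I) : kk := qq ^ (A.d i)

/-- `q_i^{1/2} = (q^{1/2})^{d_i}`. -/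
def sqi (A : CartanDatum I) (i : I) : kk := vv ^ (A.d i)

/-! ## The bosonic extension `Â` -/

/-- The free algebra on the generators `f_{i,p}`, `i ∈ I`, `p ∈ ℤ`. -/
abbrev FA (I : Type) [Fintype I] [DecidableEq I] := FreeAlgebra kk (I × ℤ)

/-- The generator `f_{i,p}` of the free algebra. -/
def Xg (p : I × ℤ) : FA I := FreeAlgebra.ι kk p

/-- The defining relations of the bosonic extension: the `q`-Serre relations and the
`q`-boson relations. -/
inductive AhatRel (A : CartanDatum I) : FA I → FA I → Prop
  | serre (i j : I) (p : ℤ) (h : i ≠ j) :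
      AhatRel A
        (∑ k ∈ Finset.range ((1 - A.c i j).toNat + 1),
          (((-1 : kk) ^ k * qbinom (qi A i) (1 - A.c i j).toNat k) •
            (Xg (i, p) ^ k * Xg (j, p) * Xg (i, p) ^ ((1 - A.c i j).toNat - k))))
        0
  | boson (i j : I) (m p : ℤ) (h : m < p) :
      AhatRel A (Xg (i, m) * Xg (j, p))
        ((qq ^ ((-1 : ℤ) ^ (p - m + 1).natAbs * A.form (alphaF i) (alphaF j))) •
            (Xg (j, p) * Xg (i, m)) +
          (if j = i ∧ p = m + 1 then ((1 : kk) - (qi A i) ^ 2) • (1 : FA I) else 0))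

/-- The bosonic extension `Â` associated to the Cartan datum `A`. -/
abbrev Ahat (A : CartanDatum I) := RingQuot (AhatRel A)

/-- The generator `f_{i,m}` of `Â`. -/
def fgen (A : CartanDatum I) (i : I) (m : ℤ) : Ahat A :=
  RingQuot.mkAlgHom kk (AhatRel A) (Xg (i, m))

/-- The divided power `F_{i,m}^{(n)}` of `F_{i,m} = q_i^{1/2} (1-q_i^2)^{-1} f_{i,m}`. -/
def Fdiv (A : CartanDatum I) (i : I) (m : ℤ) (n : ℕ) : Ahat A :=
  ((sqi A i * (1 - qi A i ^ 2)⁻¹) ^ n / qfact (qi A i) n) • fgen A i m ^ n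

/-- `T` is the braid symmetry `T_i` of `Â`: a `k`-algebra automorphism acting on the
generators by the formulas of Theorem (T-braid). -/
def IsBraidT (A : CartanDatum I) (i : I) (T : Ahat A ≃ₐ[kk] Ahat A) : Prop :=
  (∀ m : ℤ, T (fgen A i m) = fgen A i (m + 1)) ∧
  ∀ j : I, j ≠ i → ∀ m : ℤ,
    T (fgen A j m) =
      ∑ r ∈ Finset.range ((-A.c i j).toNat + 1),
        ((-qi A i) ^ ((-A.c i j).toNat - r)) •
          (Fdiv A i m r * fgen A j m * Fdiv A i m ((-A.c i j).toNat - r))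

/-- `T` is the inverse braid symmetry `T_i^⋆` of `Â`. -/
def IsBraidTStar (A : CartanDatum I) (i : I) (T : Ahat A ≃ₐ[kk] Ahat A) : Prop :=
  (∀ m : ℤ, T (fgen A i m) = fgen A i (m - 1)) ∧
  ∀ j : I, j ≠ i → ∀ m : ℤ,
    T (fgen A j m) =
      ∑ r ∈ Finset.range ((-A.c i j).toNat + 1),
        ((-qi A i) ^ r) •
          (Fdiv A i m r * fgen A j m * Fdiv A i m ((-A.c i j).toNat - r))
/-! ## Gradings, distinguished subalgebras and (anti-)automorphisms -/

/-- The weight of a list of generator indices: `wt (f_{i,m}) = -(-1)^m α_i`. -/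
def wtList (L : List (I × ℤ)) : I → ℤ :=
  fun j => (L.map (fun p => if p.1 = j then -(-1 : ℤ) ^ p.2.natAbs else 0)).sum

/-- The weight space of weight `β` of `Â`, spanned by the monomials in the generators of
total weight `β`. -/
def wtSpace (A : CartanDatum I) (β : I → ℤ) : Submodule kk (Ahat A) :=
  Submodule.span kk
    {x | ∃ L : List (I × ℤ), wtList L = β ∧ x = (L.map (fun p => fgen A p.1 p.2)).prod}

/-- The subalgebra of `Â` generated by the `f_{i,m}` with `m` satisfying `P`. -/
def subOf (A : CartanDatum I) (P : ℤ → Prop) : Subalgebra kk (Ahat A) :=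
  Algebra.adjoin kk {x | ∃ i m, P m ∧ x = fgen A i m}

/-- The subalgebra `Â[a,b]`. -/
def subAB (A : CartanDatum I) (a b : ℤ) : Subalgebra kk (Ahat A) :=
  subOf A (fun m => a ≤ m ∧ m ≤ b)

/-- The subalgebra `Â_{≥ m}`. -/
def subGE (A : CartanDatum I) (m : ℤ) : Subalgebra kk (Ahat A) := subOf A (fun p => m ≤ p)

/-- The subalgebra `Â_{< m}`. -/
def subLT (A : CartanDatum I) (m : ℤ) : Subalgebra kk (Ahat A) := subOf A (fun p => p < m)

/-- The simple reflection `s_i` acting on the root lattice. -/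
def siRef (A : CartanDatum I) (i : I) (β : I → ℤ) : I → ℤ :=
  fun j => β j - (∑ l, β l * A.c i l) * (if j = i then 1 else 0)

/-- `S` is the anti-automorphism `⋆` of `Â`, with `(f_{i,p})^⋆ = f_{i,-p}`. -/
structure IsStar (A : CartanDatum I) (S : Ahat A → Ahat A) : Prop where
  bij : Function.Bijective S
  map_add : ∀ x y, S (x + y) = S x + S y
  map_mul : ∀ x y, S (x * y) = S y * S x
  map_smul : ∀ (a : kk) (x : Ahat A), S (a • x) = a • S x
  map_one : S 1 = 1
  map_gen : ∀ i p, S (fgen A i p) = fgen A i (-p)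

/-- `bb` is the bar anti-automorphism of `Â`: it is semilinear with respect to the
involution `barK` of `k` sending `q^{±1/2}` to `q^{∓1/2}` and fixes the generators. -/
structure IsBar (A : CartanDatum I) (barK : kk →+* kk) (bb : Ahat A → Ahat A) : Prop where
  barK_v : barK vv = vv⁻¹
  bij : Function.Bijective bb
  map_add : ∀ x y, bb (x + y) = bb x + bb y
  map_mul : ∀ x y, bb (x * y) = bb y * bb x
  map_smul : ∀ (a : kk) (x : Ahat A), bb (a • x) = barK a • bb x
  map_gen : ∀ i p, bb (fgen A i p) = fgen A i p

/-- `cc` is the twisted bar involution `c` of `Â`: `c(x) = q^{N(wt x)} bar(x)` on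
homogeneous elements, where `N(β) = (β,β)/2`, so `q^{N(β)} = (q^{1/2})^{(β,β)}`. -/
structure IsC (A : CartanDatum I) (bb cc : Ahat A → Ahat A) : Prop where
  map_add : ∀ x y, cc (x + y) = cc x + cc y
  homog : ∀ (β : I → ℤ), ∀ x ∈ wtSpace A β, cc x = (vv ^ A.form β β) • bb x

/-- `D` is the shift automorphism `D̄` of `Â`, sending `f_{i,p}` to `f_{i,p+1}`. -/
def IsDbar (A : CartanDatum I) (D : Ahat A ≃ₐ[kk] Ahat A) : Prop :=
  ∀ i p, D (fgen A i p) = fgen A i (p + 1)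

/-! ## The projection `M` and the bilinear forms -/

/-- The ordered product `g(b) g(b-1) ⋯ g(a)` (indices decreasing from left to right). -/
def descProd (A : CartanDatum I) (g : ℤ → Ahat A) (a b : ℤ) : Ahat A :=
  ((List.range (b + 1 - a).toNat).map (fun t => g (b - (t : ℤ)))).prod

/-- `M` is the projection `Â → k` onto the trivial component of the triangular
decomposition `Â = ⊕ ∏→ Â[k]_{β_k}`: it sends `1` to `1` and kills every ordered
product of homogeneous components one of whose weights is nonzero. -/
def IsProjM (A : CartanDatum I) (M : Ahat A →ₗ[kk] kk) : Prop :=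
  M 1 = 1 ∧
  ∀ a b : ℤ, ∀ β : ℤ → (I → ℤ), (∃ k, a ≤ k ∧ k ≤ b ∧ β k ≠ 0) →
    ∀ g : ℤ → Ahat A,
      (∀ k, a ≤ k → k ≤ b → g k ∈ subAB A k k ∧ g k ∈ wtSpace A (β k)) →
      M (descProd A g a b) = 0

/-! ## Braid words -/

/-- The alternating composition `S ∘ T ∘ S ∘ ⋯` with `n` factors (as automorphisms,
`AlgEquiv.trans e f = f ∘ e`). -/
def altWord {A₁ : Type} [Semiring A₁] [Algebra kk A₁] :
    (A₁ ≃ₐ[kk] A₁) → (A₁ ≃ₐ[kk] A₁) → ℕ → (A₁ ≃ₐ[kk] A₁)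
  | _, _, 0 => AlgEquiv.refl
  | S, T, n + 1 => (altWord T S n).trans S

/-- The alternating composition `f ∘ g ∘ f ∘ ⋯` with `n` factors, for plain functions. -/
def altFun {X : Type} : (X → X) → (X → X) → ℕ → (X → X)
  | _, _, 0 => id
  | f, g, n + 1 => f ∘ (altFun g f n)

/-- The order `m_{i,j}` of the braid relation between `r_i` and `r_j`
(finite exactly when `c_{ij} c_{ji} ≤ 3`). -/
def mij (A : CartanDatum I) (i j : I) : ℕ :=
  if A.c i j * A.c j i ≤ 2 then (A.c i j * A.c j i + 2).toNat else 6

/-- The composition `T_{i_1} ∘ T_{i_2} ∘ ⋯ ∘ T_{i_n}` attached to a sequence `ii`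
(0-indexed: `ii t` is `i_{t+1}`). -/
def Tpref (A : CartanDatum I) (T : I → (Ahat A ≃ₐ[kk] Ahat A)) (ii : ℕ → I) :
    ℕ → (Ahat A ≃ₐ[kk] Ahat A)
  | 0 => AlgEquiv.refl
  | n + 1 => (T (ii n)).trans (Tpref A T ii n)

/-- The cuspidal element `P^i_{k+1} = T_{i_1} ⋯ T_{i_k} (q_{i_{k+1}}^{1/2} f_{i_{k+1},0})`
(0-indexed in `k`). -/
def cusp (A : CartanDatum I) (T : I → (Ahat A ≃ₐ[kk] Ahat A)) (ii : ℕ → I) (k : ℕ) :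
    Ahat A :=
  Tpref A T ii k ((vv ^ A.d (ii k)) • fgen A (ii k) 0)

/-- The divided cuspidal element `P_k^{i,(m)} = q_{i_k}^{m(m-1)/2} (P^i_k)^m`. -/
def cuspDiv (A : CartanDatum I) (T : I → (Ahat A ≃ₐ[kk] Ahat A)) (ii : ℕ → I)
    (k : ℕ) (m : ℕ) : Ahat A :=
  (qq ^ (A.d (ii k) * (m.choose 2 : ℤ))) • (cusp A T ii k) ^ m

/-- The PBW element `P^i(u) = P_r^{(u_r)} ⋯ P_1^{(u_1)}` (factors with decreasing index
from left to right), for `u : ℕ → ℕ`. -/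
def pbw (A : CartanDatum I) (T : I → (Ahat A ≃ₐ[kk] Ahat A)) (ii : ℕ → I)
    (r : ℕ) (u : ℕ → ℕ) : Ahat A :=
  ((List.range r).map (fun t => cuspDiv A T ii (r - 1 - t) (u (r - 1 - t)))).prod

/-- The PBW element `P^i(u)` for `u : Fin r → ℕ`. -/
def pbwF (A : CartanDatum I) (T : I → (Ahat A ≃ₐ[kk] Ahat A)) (ii : ℕ → I)
    (r : ℕ) (u : Fin r → ℕ) : Ahat A :=
  ((List.finRange r).reverse.map (fun k : Fin r => cuspDiv A T ii k.1 (u k))).prod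

/-- The prefix `s_{i_1} s_{i_2} ⋯ s_{i_n}` of simple reflections applied to a weight. -/
def sPref (A : CartanDatum I) (ii : ℕ → I) : ℕ → (I → ℤ) → (I → ℤ)
  | 0 => id
  | n + 1 => fun β => sPref A ii n (siRef A (ii n) β)

/-- The weight of the cuspidal element `P^i_{k+1}` (0-indexed). -/
def wtCusp (A : CartanDatum I) (ii : ℕ → I) (k : ℕ) : I → ℤ :=
  sPref A ii k (fun j => -(alphaF (ii k) j))

namespace Stmt3Aux

lemma vv_ne_zero : vv ≠ 0 := RatFunc.X_ne_zero
lemma qq_ne_zero : qq ≠ 0 := pow_ne_zero _ vv_ne_zero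

variable {I : Type} [Fintype I] [DecidableEq I]

lemma qi_ne_zero (A : CartanDatum I) (i : I) : qi A i ≠ 0 := zpow_ne_zero _ qq_ne_zero
lemma sqi_ne_zero (A : CartanDatum I) (i : I) : sqi A i ≠ 0 := zpow_ne_zero _ vv_ne_zero

lemma qi_eq_sq (A : CartanDatum I) (i : I) : qi A i = sqi A i ^ 2 := by
  unfold qi qq sqi
  rw [show (vv ^ 2 : kk) = vv * vv from sq vv, mul_zpow, sq]

lemma negOnePow_succ (m : ℤ) : (-1 : ℤ) ^ (m + 1).natAbs = -(-1 : ℤ) ^ m.natAbs := by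
  rcases Int.even_or_odd m with h | h
  · rw [(Int.natAbs_even.mpr h).neg_one_pow,
      (Int.natAbs_odd.mpr (by exact h.add_one)).neg_one_pow]
    try norm_num
  · rw [(Int.natAbs_odd.mpr h).neg_one_pow,
      (Int.natAbs_even.mpr (by exact h.add_one)).neg_one_pow]
    try norm_num

section Bar

variable {A : CartanDatum I} {barK : kk →+* kk} {bb : Ahat A → Ahat A}

lemma barK_vv_zpow (hb : barK vv = vv⁻¹) (z : ℤ) : barK (vv ^ z) = (vv ^ z)⁻¹ := by
  rw [map_zpow₀, hb, inv_zpow]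

lemma barK_sqi (hb : barK vv = vv⁻¹) (A : CartanDatum I) (i : I) :
    barK (sqi A i) = (sqi A i)⁻¹ := barK_vv_zpow hb _

lemma barK_qq (hb : barK vv = vv⁻¹) : barK qq = qq⁻¹ := by
  unfold qq; rw [map_pow, hb, inv_pow]

lemma barK_qi (hb : barK vv = vv⁻¹) (A : CartanDatum I) (i : I) :
    barK (qi A i) = (qi A i)⁻¹ := by
  unfold qi; rw [map_zpow₀, barK_qq hb, inv_zpow]

lemma barK_qint (hb : barK vv = vv⁻¹) (A : CartanDatum I) (i : I) (n : ℕ) :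
    barK (qint (qi A i) n) = qint (qi A i) n := by
  unfold qint
  rw [map_sum, ← Finset.sum_range_reflect]
  refine Finset.sum_congr rfl fun k hk => ?_
  have hk' : k < n := Finset.mem_range.mp hk
  rw [map_zpow₀, barK_qi hb, inv_zpow, ← zpow_neg]
  congr 1
  omega

lemma barK_qfact (hb : barK vv = vv⁻¹) (A : CartanDatum I) (i : I) (n : ℕ) :
    barK (qfact (qi A i) n) = qfact (qi A i) n := by
  unfold qfact
  rw [map_prod]
  exact Finset.prod_congr rfl fun s _ => barK_qint hb A i (s + 1)

lemma barK_gamma (hb : barK vv = vv⁻¹) (A : CartanDatum I) (i : I) (n : ℕ) :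
    barK ((sqi A i * (1 - qi A i ^ 2)⁻¹) ^ n / qfact (qi A i) n)
      = (-qi A i) ^ n * ((sqi A i * (1 - qi A i ^ 2)⁻¹) ^ n / qfact (qi A i) n) := by
  have key : (sqi A i)⁻¹ * (1 - (qi A i)⁻¹ ^ 2)⁻¹
      = -qi A i * (sqi A i * (1 - qi A i ^ 2)⁻¹) := by
    rw [inv_pow]
    have h2 : (1 : kk) - ((qi A i) ^ 2)⁻¹ = -((qi A i) ^ 2)⁻¹ * (1 - qi A i ^ 2) := by
      rw [neg_mul, mul_sub, mul_one, inv_mul_cancel₀ (pow_ne_zero 2 (qi_ne_zero A i)),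
        neg_sub]
    have h3 : (sqi A i)⁻¹ * (qi A i ^ 2) = qi A i * sqi A i := by
      rw [qi_eq_sq, ← pow_mul]
      have h4 : sqi A i ^ (2 * 2) = sqi A i * sqi A i ^ 3 := by ring
      rw [h4, ← mul_assoc, inv_mul_cancel₀ (sqi_ne_zero A i), one_mul]
      ring
    rw [h2, mul_inv, inv_neg, inv_inv,
      show (sqi A i)⁻¹ * (-(qi A i ^ 2) * (1 - qi A i ^ 2)⁻¹)
        = ((sqi A i)⁻¹ * qi A i ^ 2) * -(1 - qi A i ^ 2)⁻¹ from by ring, h3]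
    ring
  rw [map_div₀, map_pow, map_mul, map_inv₀, map_sub, map_one, map_pow,
    barK_qi hb, barK_sqi hb, barK_qfact hb, key, mul_pow, mul_div_assoc]

end Bar
end Stmt3Aux
set_option linter.unusedSectionVars false
namespace Stmt3Aux

variable {I : Type} [Fintype I] [DecidableEq I]

lemma adjoin_fgen (A : CartanDatum I) :
    Algebra.adjoin kk (Set.range fun p : I × ℤ => fgen A p.1 p.2) = ⊤ := by
  have h := AlgHom.map_adjoin (RingQuot.mkAlgHom kk (AhatRel A))
    (Set.range (FreeAlgebra.ι kk (X := I × ℤ)))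
  rw [FreeAlgebra.adjoin_range_ι, ← Set.range_comp] at h
  have h2 : (Set.range (⇑(RingQuot.mkAlgHom kk (AhatRel A)) ∘ FreeAlgebra.ι kk))
      = (Set.range fun p : I × ℤ => fgen A p.1 p.2) := rfl
  rw [h2] at h
  rw [← h, Algebra.map_top,
    (AlgHom.range_eq_top _).mpr (RingQuot.mkAlgHom_surjective _ _)]

lemma ext_hom (A : CartanDatum I) (σ : kk →+* kk) (f g : Ahat A → Ahat A)
    (hfa : ∀ x y, f (x + y) = f x + f y) (hga : ∀ x y, g (x + y) = g x + g y)
    (hfm : ∀ x y, f (x * y) = f x * f y) (hgm : ∀ x y, g (x * y) = g x * g y)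
    (hfs : ∀ (a : kk) x, f (a • x) = σ a • f x) (hgs : ∀ (a : kk) x, g (a • x) = σ a • g x)
    (hf1 : f 1 = 1) (hg1 : g 1 = 1)
    (hgen : ∀ (j : I) (m : ℤ), f (fgen A j m) = g (fgen A j m)) (x : Ahat A) :
    f x = g x := by
  have hx : x ∈ Algebra.adjoin kk (Set.range fun p : I × ℤ => fgen A p.1 p.2) := by
    rw [adjoin_fgen]; trivial
  induction hx using Algebra.adjoin_induction with
  | mem y hy => obtain ⟨p, rfl⟩ := hy; exact hgen p.1 p.2
  | algebraMap r => rw [Algebra.algebraMap_eq_smul_one, hfs, hgs, hf1, hg1]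
  | add x y _ _ hx hy => rw [hfa, hga, hx, hy]
  | mul x y _ _ hx hy => rw [hfm, hgm, hx, hy]

lemma ext_antihom (A : CartanDatum I) (σ : kk →+* kk) (f g : Ahat A → Ahat A)
    (hfa : ∀ x y, f (x + y) = f x + f y) (hga : ∀ x y, g (x + y) = g x + g y)
    (hfm : ∀ x y, f (x * y) = f y * f x) (hgm : ∀ x y, g (x * y) = g y * g x)
    (hfs : ∀ (a : kk) x, f (a • x) = σ a • f x) (hgs : ∀ (a : kk) x, g (a • x) = σ a • g x)
    (hf1 : f 1 = 1) (hg1 : g 1 = 1)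
    (hgen : ∀ (j : I) (m : ℤ), f (fgen A j m) = g (fgen A j m)) (x : Ahat A) :
    f x = g x := by
  have hx : x ∈ Algebra.adjoin kk (Set.range fun p : I × ℤ => fgen A p.1 p.2) := by
    rw [adjoin_fgen]; trivial
  induction hx using Algebra.adjoin_induction with
  | mem y hy => obtain ⟨p, rfl⟩ := hy; exact hgen p.1 p.2
  | algebraMap r => rw [Algebra.algebraMap_eq_smul_one, hfs, hgs, hf1, hg1]
  | add x y _ _ hx hy => rw [hfa, hga, hx, hy]
  | mul x y _ _ hx hy => rw [hfm, hgm, hx, hy]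

lemma anti_pow {A : CartanDatum I} {f : Ahat A → Ahat A}
    (hm : ∀ x y, f (x * y) = f y * f x) (h1 : f 1 = 1) (x : Ahat A) (n : ℕ) :
    f (x ^ n) = f x ^ n := by
  induction n with
  | zero => simpa using h1
  | succ n ih => rw [pow_succ, hm, ih, ← pow_succ']

lemma fun_sum {A : CartanDatum I} {f : Ahat A → Ahat A}
    (ha : ∀ x y, f (x + y) = f x + f y) {γ : Type*} (s : Finset γ) (g : γ → Ahat A) :
    f (∑ r ∈ s, g r) = ∑ r ∈ s, f (g r) :=
  map_sum (AddMonoidHom.mk' f ha) g s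

/-! wtList / wtSpace lemmas -/

lemma wtList_nil : wtList ([] : List (I × ℤ)) = 0 := by
  funext j; simp [wtList]

lemma wtList_append (L1 L2 : List (I × ℤ)) :
    wtList (L1 ++ L2) = wtList L1 + wtList L2 := by
  funext j; simp [wtList]

lemma wtList_cons (p : I × ℤ) (L : List (I × ℤ)) :
    wtList (p :: L) = wtList [p] + wtList L := by
  funext j; simp [wtList]

lemma mem_wtSpace_self (A : CartanDatum I) (L : List (I × ℤ)) :
    (L.map fun p => fgen A p.1 p.2).prod ∈ wtSpace A (wtList L) :=
  Submodule.subset_span ⟨L, rfl, rfl⟩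

lemma wtSpace_mul (A : CartanDatum I) {x y : Ahat A} {β γ : I → ℤ}
    (hx : x ∈ wtSpace A β) (hy : y ∈ wtSpace A γ) : x * y ∈ wtSpace A (β + γ) := by
  have h : wtSpace A β * wtSpace A γ ≤ wtSpace A (β + γ) := by
    rw [wtSpace, wtSpace, Submodule.span_mul_span]
    refine Submodule.span_le.mpr ?_
    rintro z hz
    rw [Set.mem_mul] at hz
    obtain ⟨u, ⟨L1, h1, rfl⟩, v, ⟨L2, h2, rfl⟩, rfl⟩ := hz
    refine Submodule.subset_span ⟨L1 ++ L2, ?_, ?_⟩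
    · rw [wtList_append, h1, h2]
    · rw [List.map_append, List.prod_append]
  exact h (Submodule.mul_mem_mul hx hy)

lemma fgen_pow_mem (A : CartanDatum I) (j : I) (m : ℤ) (n : ℕ) :
    fgen A j m ^ n ∈ wtSpace A (wtList (List.replicate n (j, m))) := by
  have := mem_wtSpace_self A (List.replicate n (j, m))
  rwa [List.map_replicate, List.prod_replicate] at this

lemma fgen_mem (A : CartanDatum I) (j : I) (m : ℤ) :
    fgen A j m ∈ wtSpace A (wtList [(j, m)]) := by
  have := mem_wtSpace_self A [(j, m)]
  simpa using this

/-! the span of all monomials is everything -/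

lemma span_Mon_top (A : CartanDatum I) :
    Submodule.span kk {x : Ahat A | ∃ L : List (I × ℤ),
      x = (L.map fun p => fgen A p.1 p.2).prod} = ⊤ := by
  set Mon : Set (Ahat A) := {x | ∃ L : List (I × ℤ),
      x = (L.map fun p => fgen A p.1 p.2).prod} with hMon
  have h1 : (1 : Ahat A) ∈ Submodule.span kk Mon :=
    Submodule.subset_span ⟨[], by simp⟩
  have hmul : ∀ x y : Ahat A, x ∈ Submodule.span kk Mon → y ∈ Submodule.span kk Mon →
      x * y ∈ Submodule.span kk Mon := by
    intro x y hx hy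
    have h : Submodule.span kk Mon * Submodule.span kk Mon ≤ Submodule.span kk Mon := by
      rw [Submodule.span_mul_span]
      refine Submodule.span_le.mpr ?_
      rintro z hz
      rw [Set.mem_mul] at hz
      obtain ⟨u, ⟨L1, rfl⟩, v, ⟨L2, rfl⟩, rfl⟩ := hz
      exact Submodule.subset_span ⟨L1 ++ L2, by rw [List.map_append, List.prod_append]⟩
    exact h (Submodule.mul_mem_mul hx hy)
  have htop : (⊤ : Subalgebra kk (Ahat A)) ≤ (Submodule.span kk Mon).toSubalgebra h1 hmul := by
    rw [← adjoin_fgen A]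
    refine Algebra.adjoin_le ?_
    rintro z ⟨p, rfl⟩
    exact Submodule.subset_span ⟨[p], by simp⟩
  refine top_unique fun x _ => htop (Algebra.mem_top)

lemma mem_homog_closure (A : CartanDatum I) (x : Ahat A) :
    x ∈ AddSubmonoid.closure (⋃ β : I → ℤ, (wtSpace A β : Set (Ahat A))) := by
  set N := AddSubmonoid.closure (⋃ β : I → ℤ, (wtSpace A β : Set (Ahat A))) with hN
  have hsmul : ∀ (a : kk) (y : Ahat A), y ∈ N → a • y ∈ N := by
    intro a y hy
    refine AddSubmonoid.closure_induction (motive := fun z _ => a • z ∈ N) ?_ ?_ ?_ hy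
    · intro z hz
      obtain ⟨s, ⟨β, rfl⟩, hz⟩ := hz
      exact AddSubmonoid.subset_closure
        (Set.mem_iUnion.mpr ⟨β, Submodule.smul_mem _ a hz⟩)
    · show a • (0 : Ahat A) ∈ N
      rw [smul_zero]; exact N.zero_mem
    · intro u v _ _ hu hv
      show a • (u + v) ∈ N
      rw [smul_add]; exact N.add_mem hu hv
  let N' : Submodule kk (Ahat A) :=
    { carrier := N
      add_mem' := fun hx hy => N.add_mem hx hy
      zero_mem' := N.zero_mem
      smul_mem' := fun a y hy => hsmul a y hy }
  have hle : Submodule.span kk {x : Ahat A | ∃ L : List (I × ℤ),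
      x = (L.map fun p => fgen A p.1 p.2).prod} ≤ N' := by
    refine Submodule.span_le.mpr ?_
    rintro z ⟨L, rfl⟩
    exact AddSubmonoid.subset_closure
      (Set.mem_iUnion.mpr ⟨wtList L, mem_wtSpace_self A L⟩)
  rw [span_Mon_top A] at hle
  exact hle Submodule.mem_top

end Stmt3Aux
namespace Stmt3Aux
section Form
variable {I : Type} [Fintype I] [DecidableEq I]

lemma siRef_add (A : CartanDatum I) (i : I) (β γ : I → ℤ) :
    siRef A i (β + γ) = siRef A i β + siRef A i γ := by
  funext j
  simp only [siRef, Pi.add_apply, add_mul, Finset.sum_add_distrib]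
  ring

lemma siRef_zero (A : CartanDatum I) (i : I) : siRef A i 0 = 0 := by
  funext j; simp [siRef]

lemma form_sub_left (A : CartanDatum I) (β γ δ : I → ℤ) :
    A.form (β - γ) δ = A.form β δ - A.form γ δ := by
  unfold CartanDatum.form
  rw [← Finset.sum_sub_distrib]
  refine Finset.sum_congr rfl fun k _ => ?_
  rw [← Finset.sum_sub_distrib]
  refine Finset.sum_congr rfl fun j _ => ?_
  simp only [Pi.sub_apply]; ring

lemma form_sub_right (A : CartanDatum I) (β γ δ : I → ℤ) :
    A.form β (γ - δ) = A.form β γ - A.form β δ := by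
  unfold CartanDatum.form
  rw [← Finset.sum_sub_distrib]
  refine Finset.sum_congr rfl fun k _ => ?_
  rw [← Finset.sum_sub_distrib]
  refine Finset.sum_congr rfl fun j _ => ?_
  simp only [Pi.sub_apply]; ring

lemma form_zsmul_left (A : CartanDatum I) (t : ℤ) (γ δ : I → ℤ) :
    A.form (t • γ) δ = t * A.form γ δ := by
  unfold CartanDatum.form
  rw [Finset.mul_sum]
  refine Finset.sum_congr rfl fun k _ => ?_
  rw [Finset.mul_sum]
  refine Finset.sum_congr rfl fun j _ => ?_
  simp only [Pi.smul_apply, smul_eq_mul]; ring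

lemma form_zsmul_right (A : CartanDatum I) (t : ℤ) (γ δ : I → ℤ) :
    A.form γ (t • δ) = t * A.form γ δ := by
  unfold CartanDatum.form
  rw [Finset.mul_sum]
  refine Finset.sum_congr rfl fun k _ => ?_
  rw [Finset.mul_sum]
  refine Finset.sum_congr rfl fun j _ => ?_
  simp only [Pi.smul_apply, smul_eq_mul]; ring

lemma form_alpha_left (A : CartanDatum I) (i : I) (δ : I → ℤ) :
    A.form (alphaF i) δ = ∑ j, A.d i * A.c i j * δ j := by
  unfold CartanDatum.form alphaF
  rw [Finset.sum_comm]
  refine Finset.sum_congr rfl fun j _ => ?_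
  simp [ite_mul, Finset.sum_ite_eq']

lemma form_alpha_right (A : CartanDatum I) (i : I) (δ : I → ℤ) :
    A.form δ (alphaF i) = ∑ k, δ k * (A.d k * A.c k i) := by
  unfold CartanDatum.form alphaF
  refine Finset.sum_congr rfl fun k _ => ?_
  simp [mul_ite, Finset.sum_ite_eq']

lemma form_siRef (A : CartanDatum I) (i : I) (β : I → ℤ) :
    A.form (siRef A i β) (siRef A i β) = A.form β β := by
  have hsi : siRef A i β = β - (∑ l, β l * A.c i l) • alphaF i := by
    funext j
    simp only [siRef, Pi.sub_apply, Pi.smul_apply, alphaF, smul_eq_mul]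
  set t := ∑ l, β l * A.c i l with ht
  have h1 : A.form β (alphaF i) = A.d i * t := by
    rw [form_alpha_right]
    calc ∑ k, β k * (A.d k * A.c k i)
        = ∑ k, A.d i * (β k * A.c i k) :=
          Finset.sum_congr rfl fun k _ => by rw [← A.symm i k]; ring
      _ = A.d i * t := by rw [← Finset.mul_sum]
  have h2 : A.form (alphaF i) β = A.d i * t := by
    rw [form_alpha_left]
    calc ∑ j, A.d i * A.c i j * β j
        = ∑ j, A.d i * (β j * A.c i j) := Finset.sum_congr rfl fun j _ => by ring
      _ = A.d i * t := by rw [← Finset.mul_sum]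
  have h3 : A.form (alphaF i) (alphaF i) = 2 * A.d i := by
    rw [form_alpha_left]
    simp only [alphaF, mul_ite, mul_one, mul_zero]
    rw [Finset.sum_ite_eq']
    simp [A.c_diag i]
    ring
  rw [hsi, form_sub_left, form_sub_right, form_sub_right, form_zsmul_left,
    form_zsmul_right, form_zsmul_right, form_zsmul_left, h1, h2, h3]
  ring

end Form
end Stmt3Aux

-- quick check that map_smul works on AlgEquiv
example {I : Type} [Fintype I] [DecidableEq I] (A : CartanDatum I)
    (T : Ahat A ≃ₐ[kk] Ahat A) (a : kk) (x : Ahat A) : T (a • x) = a • T x :=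
  map_smul T a x
namespace Stmt3Aux
section Wt
variable {I : Type} [Fintype I] [DecidableEq I]

lemma wtList_replicate (j : I) (m : ℤ) (n : ℕ) :
    wtList (List.replicate n (j, m))
      = fun l => (n : ℤ) * (if j = l then -(-1 : ℤ) ^ m.natAbs else 0) := by
  funext l
  simp [wtList, List.map_replicate, List.sum_replicate, nsmul_eq_mul]

lemma wtList_single (j : I) (m : ℤ) (l : I) :
    wtList [(j, m)] l = if j = l then -(-1 : ℤ) ^ m.natAbs else 0 := by
  simp [wtList]

lemma sum_wt_single (A : CartanDatum I) (i j : I) (m : ℤ) :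
    ∑ t, wtList [(j, m)] t * A.c i t = -(-1 : ℤ) ^ m.natAbs * A.c i j := by
  simp only [wtList_single, ite_mul, zero_mul]
  rw [Finset.sum_ite_eq]
  simp

lemma siRef_wt_i (A : CartanDatum I) (i : I) (m : ℤ) :
    siRef A i (wtList [(i, m)]) = wtList [(i, m + 1)] := by
  funext l
  show wtList [(i, m)] l - (∑ t, wtList [(i, m)] t * A.c i t) * (if l = i then 1 else 0)
      = wtList [(i, m + 1)] l
  rw [sum_wt_single, A.c_diag, wtList_single, wtList_single]
  by_cases hl : l = i
  · subst hl
    simp only [negOnePow_succ]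
    norm_num
    ring
  · have hil : ¬ i = l := fun h => hl h.symm
    simp [hl, hil]

lemma wt_braid_term (A : CartanDatum I) {i j : I} (hij : j ≠ i) (m : ℤ) {r : ℕ}
    (hr : r ≤ (-A.c i j).toNat) :
    wtList (List.replicate r (i, m) ++ [(j, m)]
        ++ List.replicate ((-A.c i j).toNat - r) (i, m))
      = siRef A i (wtList [(j, m)]) := by
  have hcij : A.c i j ≤ 0 := A.c_offdiag i j (Ne.symm hij)
  have hcast : (((-A.c i j).toNat - r : ℕ) : ℤ) = -A.c i j - r := by omega
  funext l
  rw [wtList_append, wtList_append, wtList_replicate, wtList_replicate]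
  show _ = wtList [(j, m)] l - (∑ t, wtList [(j, m)] t * A.c i t) * (if l = i then 1 else 0)
  rw [sum_wt_single]
  simp only [Pi.add_apply, wtList_single]
  by_cases hl : l = i
  · subst hl
    simp only [if_neg hij]
    norm_num
    rw [hcast]
    ring
  · have hil : ¬ (i = l) := fun h => hl h.symm
    simp [hil, hl]

end Wt
end Stmt3Aux
namespace Stmt3Aux
section Gen
variable {I : Type} [Fintype I] [DecidableEq I]
variable {A : CartanDatum I} {i : I} {T Ts D : Ahat A ≃ₐ[kk] Ahat A}

lemma Fdiv_mem_wt (A : CartanDatum I) (i : I) (m : ℤ) (n : ℕ) :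
    Fdiv A i m n ∈ wtSpace A (wtList (List.replicate n (i, m))) :=
  Submodule.smul_mem _ _ (fgen_pow_mem A i m n)

lemma Tgen_wt (hT : IsBraidT A i T) (j : I) (m : ℤ) :
    T (fgen A j m) ∈ wtSpace A (siRef A i (wtList [(j, m)])) := by
  by_cases hj : j = i
  · subst hj
    rw [hT.1 m, siRef_wt_i]
    exact fgen_mem A _ (m + 1)
  · rw [hT.2 j hj m]
    refine Submodule.sum_mem _ fun r hr => Submodule.smul_mem _ _ ?_
    have hr' : r ≤ (-A.c i j).toNat := by
      have := Finset.mem_range.mp hr; omega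
    rw [← wt_braid_term A hj m hr', wtList_append, wtList_append]
    exact wtSpace_mul A (wtSpace_mul A (Fdiv_mem_wt A i m r) (fgen_mem A j m))
      (Fdiv_mem_wt A i m _)

lemma Tprod_wt (hT : IsBraidT A i T) :
    ∀ L : List (I × ℤ),
      T ((L.map fun p => fgen A p.1 p.2).prod) ∈ wtSpace A (siRef A i (wtList L))
  | [] => by
      simp only [List.map_nil, List.prod_nil, map_one, wtList_nil, siRef_zero]
      have h := mem_wtSpace_self A ([] : List (I × ℤ))
      rw [wtList_nil] at h
      simpa using h
  | p :: L => by
      rw [List.map_cons, List.prod_cons, map_mul, wtList_cons, siRef_add]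
      exact wtSpace_mul A (Tgen_wt hT p.1 p.2) (Tprod_wt hT L)

lemma T_wt (hT : IsBraidT A i T) (β : I → ℤ) (x : Ahat A) (hx : x ∈ wtSpace A β) :
    T x ∈ wtSpace A (siRef A i β) := by
  induction hx using Submodule.span_induction with
  | mem z hz =>
      obtain ⟨L, hL, rfl⟩ := hz
      rw [← hL]
      exact Tprod_wt hT L
  | zero => rw [map_zero]; exact Submodule.zero_mem _
  | add u v _ _ hu hv => rw [map_add]; exact Submodule.add_mem _ hu hv
  | smul a z _ hz => rw [map_smul]; exact Submodule.smul_mem _ a hz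

/-! part (i) generators -/

lemma Dcomm_gen (hT : IsBraidT A i T) (hD : IsDbar A D) (j : I) (m : ℤ) :
    D (T (fgen A j m)) = T (D (fgen A j m)) := by
  by_cases hj : j = i
  · subst hj; rw [hT.1, hD, hD, hT.1]
  · have hF : ∀ (m' : ℤ) (n : ℕ), D (Fdiv A i m' n) = Fdiv A i (m' + 1) n := by
      intro m' n; unfold Fdiv; rw [map_smul, map_pow, hD]
    rw [hD j m, hT.2 j hj m, hT.2 j hj (m + 1), map_sum]
    refine Finset.sum_congr rfl fun r hr => ?_
    rw [map_smul, map_mul, map_mul, hF, hF, hD]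

/-! part (ii) generators -/

lemma STS_gen {S : Ahat A → Ahat A} (hT : IsBraidT A i T) (hTs : IsBraidTStar A i Ts)
    (hS : IsStar A S) (j : I) (m : ℤ) :
    Ts (fgen A j m) = S (T (S (fgen A j m))) := by
  by_cases hj : j = i
  · subst hj
    rw [hTs.1, hS.map_gen, hT.1, hS.map_gen]
    have h : (-(-m + 1) : ℤ) = m - 1 := by ring
    rw [h]
  · have hSF : ∀ (m' : ℤ) (n : ℕ), S (Fdiv A i m' n) = Fdiv A i (-m') n := by
      intro m' n; unfold Fdiv
      rw [hS.map_smul, anti_pow hS.map_mul hS.map_one, hS.map_gen]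
    rw [hS.map_gen, hT.2 j hj (-m), fun_sum hS.map_add, hTs.2 j hj m,
      ← Finset.sum_range_reflect]
    refine Finset.sum_congr rfl fun r hr => ?_
    have hr' : r ≤ (-A.c i j).toNat := by
      have := Finset.mem_range.mp hr; omega
    simp only [Nat.add_sub_cancel]
    rw [hS.map_smul, hS.map_mul, hS.map_mul, hSF, hSF, hS.map_gen, neg_neg,
      Nat.sub_sub_self hr', mul_assoc]

/-! part (iii) generators -/

lemma bar_one {barK : kk →+* kk} {bb : Ahat A → Ahat A} (hbar : IsBar A barK bb) :
    bb 1 = 1 := by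
  obtain ⟨y, hy⟩ := hbar.bij.2 1
  have h := hbar.map_mul y 1
  rw [mul_one, hy] at h
  rw [mul_one] at h
  exact h.symm

lemma barT_gen {barK : kk →+* kk} {bb : Ahat A → Ahat A} (hT : IsBraidT A i T)
    (hbar : IsBar A barK bb) (j : I) (m : ℤ) :
    T (bb (fgen A j m)) = bb (T (fgen A j m)) := by
  by_cases hj : j = i
  · subst hj; rw [hbar.map_gen, hT.1, hbar.map_gen]
  · have hbF : ∀ n : ℕ, bb (Fdiv A i m n) = (-qi A i) ^ n • Fdiv A i m n := by
      intro n; unfold Fdiv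
      rw [hbar.map_smul, anti_pow hbar.map_mul (bar_one hbar), hbar.map_gen,
        barK_gamma hbar.barK_v A i n, ← smul_smul]
    rw [hbar.map_gen, hT.2 j hj m, fun_sum hbar.map_add, ← Finset.sum_range_reflect]
    refine Finset.sum_congr rfl fun r hr => ?_
    have hr' : r ≤ (-A.c i j).toNat := by
      have := Finset.mem_range.mp hr; omega
    simp only [Nat.add_sub_cancel]
    rw [hbar.map_smul, hbar.map_mul, hbar.map_mul, hbF, hbF, hbar.map_gen,
      Nat.sub_sub_self hr', map_pow, map_neg, barK_qi hbar.barK_v]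
    simp only [smul_mul_assoc, mul_smul_comm, smul_smul]
    congr 1
    have hq : (-(qi A i)⁻¹) * (-qi A i) = 1 := by
      rw [neg_mul_neg, inv_mul_cancel₀ (qi_ne_zero A i)]
    calc ((-qi A i) : kk) ^ r
        = ((-(qi A i)⁻¹) * (-qi A i)) ^ ((-A.c i j).toNat - r) * (-qi A i) ^ r := by
          rw [hq, one_pow, one_mul]
      _ = _ := by rw [mul_pow]; ring
    rw [mul_assoc]

end Gen
end Stmt3Aux
namespace Stmt3Aux
section AB
variable {I : Type} [Fintype I] [DecidableEq I]
variable {A : CartanDatum I} {i : I} {T Ts : Ahat A ≃ₐ[kk] Ahat A}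

lemma mem_subAB (hT : IsBraidT A i T) (hTs : IsBraidTStar A i Ts) (a b : ℤ)
    (x : Ahat A) (hx : x ∈ subAB A a b) :
    T x ∈ subAB A a (b + 1) ∧ Ts x ∈ subAB A (a - 1) b := by
  have hx' : x ∈ Algebra.adjoin kk
      {y : Ahat A | ∃ j m, (a ≤ m ∧ m ≤ b) ∧ y = fgen A j m} := hx
  clear hx
  induction hx' using Algebra.adjoin_induction with
  | mem z hz =>
      obtain ⟨j, m, ⟨ham, hmb⟩, rfl⟩ := hz
      constructor
      · by_cases hj : j = i
        · subst hj
          rw [hT.1]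
          exact Algebra.subset_adjoin ⟨j, m + 1, ⟨by omega, by omega⟩, rfl⟩
        · rw [hT.2 j hj m]
          have hgen1 : fgen A i m ∈ subAB A a (b + 1) :=
            Algebra.subset_adjoin ⟨i, m, ⟨by omega, by omega⟩, rfl⟩
          have hgen2 : fgen A j m ∈ subAB A a (b + 1) :=
            Algebra.subset_adjoin ⟨j, m, ⟨by omega, by omega⟩, rfl⟩
          have hF : ∀ n : ℕ, Fdiv A i m n ∈ subAB A a (b + 1) := fun n =>
            Subalgebra.smul_mem _ (pow_mem hgen1 n) _
          exact Subalgebra.sum_mem _ fun r _ =>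
            Subalgebra.smul_mem _ (mul_mem (mul_mem (hF r) hgen2) (hF _)) _
      · by_cases hj : j = i
        · subst hj
          rw [hTs.1]
          exact Algebra.subset_adjoin ⟨j, m - 1, ⟨by omega, by omega⟩, rfl⟩
        · rw [hTs.2 j hj m]
          have hgen1 : fgen A i m ∈ subAB A (a - 1) b :=
            Algebra.subset_adjoin ⟨i, m, ⟨by omega, by omega⟩, rfl⟩
          have hgen2 : fgen A j m ∈ subAB A (a - 1) b :=
            Algebra.subset_adjoin ⟨j, m, ⟨by omega, by omega⟩, rfl⟩
          have hF : ∀ n : ℕ, Fdiv A i m n ∈ subAB A (a - 1) b := fun n =>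
            Subalgebra.smul_mem _ (pow_mem hgen1 n) _
          exact Subalgebra.sum_mem _ fun r _ =>
            Subalgebra.smul_mem _ (mul_mem (mul_mem (hF r) hgen2) (hF _)) _
  | algebraMap r =>
      exact ⟨by rw [AlgEquiv.commutes]; exact Subalgebra.algebraMap_mem _ r,
        by rw [AlgEquiv.commutes]; exact Subalgebra.algebraMap_mem _ r⟩
  | add u v _ _ hu hv =>
      exact ⟨by rw [map_add]; exact add_mem hu.1 hv.1,
        by rw [map_add]; exact add_mem hu.2 hv.2⟩
  | mul u v _ _ hu hv =>
      exact ⟨by rw [map_mul]; exact mul_mem hu.1 hv.1,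
        by rw [map_mul]; exact mul_mem hu.2 hv.2⟩

end AB
end Stmt3Aux
/-- Properties of the braid symmetry `T_i`:
(i) `D̄ ∘ T_i = T_i ∘ D̄`; (ii) `T_i^⋆ = ⋆ ∘ T_i ∘ ⋆`; (iii) `T_i` commutes with the bar
involution; (iv) `T_i` commutes with `c`; (v) `wt(T_i x) = s_i (wt x)` for homogeneous `x`;
(vi) `T_i(Â[a,b]) ⊆ Â[a,b+1]` and `T_i^⋆(Â[a,b]) ⊆ Â[a-1,b]` for all `a ≤ b`. -/
theorem statement3 {I : Type} [Fintype I] [DecidableEq I] (A : CartanDatum I) (i : I)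
    (T Ts D : Ahat A ≃ₐ[kk] Ahat A) (S bb cc : Ahat A → Ahat A) (barK : kk →+* kk)
    (hT : IsBraidT A i T) (hTs : IsBraidTStar A i Ts) (hD : IsDbar A D)
    (hS : IsStar A S) (hbar : IsBar A barK bb) (hc : IsC A bb cc) :
    (∀ x, D (T x) = T (D x)) ∧
    (∀ x, Ts x = S (T (S x))) ∧
    (∀ x, T (bb x) = bb (T x)) ∧
    (∀ x, T (cc x) = cc (T x)) ∧
    (∀ (β : I → ℤ), ∀ x ∈ wtSpace A β, T x ∈ wtSpace A (siRef A i β)) ∧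
    (∀ a b : ℤ, a ≤ b → ∀ x ∈ subAB A a b,
      T x ∈ subAB A a (b + 1) ∧ Ts x ∈ subAB A (a - 1) b) := by
  classical
  have part1 : ∀ x, D (T x) = T (D x) := fun x =>
    Stmt3Aux.ext_hom A (RingHom.id kk) (fun y => D (T y)) (fun y => T (D y))
      (fun u v => by simp only [map_add]) (fun u v => by simp only [map_add])
      (fun u v => by simp only [map_mul]) (fun u v => by simp only [map_mul])
      (fun a u => by simp [map_smul]) (fun a u => by simp [map_smul])
      (by simp only [map_one]) (by simp only [map_one])
      (fun j m => Stmt3Aux.Dcomm_gen hT hD j m) x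
  have part2 : ∀ x, Ts x = S (T (S x)) := fun x =>
    Stmt3Aux.ext_hom A (RingHom.id kk) (fun y => Ts y) (fun y => S (T (S y)))
      (fun u v => by simp only [map_add]) (fun u v => by simp only [hS.map_add, map_add])
      (fun u v => by simp only [map_mul])
      (fun u v => by simp only [hS.map_mul, map_mul])
      (fun a u => by simp [map_smul]) (fun a u => by simp [hS.map_smul, map_smul])
      (map_one Ts) (by simp only [hS.map_one, map_one])
      (fun j m => Stmt3Aux.STS_gen hT hTs hS j m) x
  have part3 : ∀ x, T (bb x) = bb (T x) := fun x =>
    Stmt3Aux.ext_antihom A barK (fun y => T (bb y)) (fun y => bb (T y))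
      (fun u v => by simp only [hbar.map_add, map_add])
      (fun u v => by simp only [map_add, hbar.map_add])
      (fun u v => by simp only [hbar.map_mul, map_mul])
      (fun u v => by simp only [map_mul, hbar.map_mul])
      (fun a u => by simp only [hbar.map_smul, map_smul])
      (fun a u => by simp only [map_smul, hbar.map_smul])
      (by simp only [Stmt3Aux.bar_one hbar, map_one])
      (by simp only [map_one, Stmt3Aux.bar_one hbar])
      (fun j m => Stmt3Aux.barT_gen hT hbar j m) x
  have part5 : ∀ (β : I → ℤ), ∀ x ∈ wtSpace A β, T x ∈ wtSpace A (siRef A i β) :=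
    fun β x hx => Stmt3Aux.T_wt hT β x hx
  have cc0 : cc 0 = 0 := by
    have h := hc.map_add 0 0
    rw [add_zero] at h
    exact (add_eq_left.mp h.symm)
  have part4 : ∀ x, T (cc x) = cc (T x) := by
    intro x
    refine AddSubmonoid.closure_induction (motive := fun z _ => T (cc z) = cc (T z)) ?_ ?_ ?_
      (Stmt3Aux.mem_homog_closure A x)
    · intro z hz
      obtain ⟨β, hzβ⟩ := Set.mem_iUnion.mp hz
      show T (cc z) = cc (T z)
      rw [hc.homog β z hzβ, map_smul, part3 z,
        hc.homog (siRef A i β) (T z) (part5 β z hzβ), Stmt3Aux.form_siRef]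
    · show T (cc 0) = cc (T 0)
      rw [cc0, map_zero, cc0]
    · intro u v _ _ hu hv
      show T (cc (u + v)) = cc (T (u + v))
      rw [hc.map_add, map_add, hu, hv, map_add, hc.map_add]
  exact ⟨part1, part2, part3, part4, part5,
    fun a b _ x hx => Stmt3Aux.mem_subAB hT hTs a b x hx⟩
end
end

section
/- For every i ∈ I and every x ∈ Â, one has M(T_i(x)) = M(x), where M: Â → k is the projection onto the degree-zero component of the triangular decomposition of Â. -/
noncomputable section
open scoped Classical
open Finset

variable {I : Type} [Fintype I] [DecidableEq I]

namespace S4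
open List

variable {I : Type}

def sortedD (u : List (I × ℤ)) : Prop := u.Chain' (fun x y => y.2 ≤ x.2)

def asc : List (I × ℤ) → ℕ
  | [] => 0
  | x :: t => t.countP (fun y => decide (x.2 < y.2)) + asc t

def msr (u : List (I × ℤ)) : ℕ := u.length ^ 3 + asc u

theorem asc_le (u : List (I × ℤ)) : asc u ≤ u.length ^ 2 := by
  induction u with
  | nil => simp [asc]
  | cons x t ih =>
    have h1 : t.countP (fun y => decide (x.2 < y.2)) ≤ t.length := List.countP_le_length
    have : t.length ^ 2 + (t.length + 1) ≤ (t.length + 1) ^ 2 := by ring_nf; omega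
    simp only [asc, List.length_cons]
    omega

theorem asc_swap (v₁ v₂ : List (I × ℤ)) (x y : I × ℤ) (h : x.2 < y.2) :
    asc (v₁ ++ x :: y :: v₂) = asc (v₁ ++ y :: x :: v₂) + 1 := by
  induction v₁ with
  | nil =>
    simp only [List.nil_append, asc, List.countP_cons]
    have hx : (decide (x.2 < y.2)) = true := by simpa using h
    have hy : (decide (y.2 < x.2)) = false := by simp; omega
    rw [hx, hy]
    simp only [if_true]
    simp only [show (false = true) = False by simp, if_false]
    omega
  | cons z v₁ ih =>
    have hperm : (v₁ ++ x :: y :: v₂).Perm (v₁ ++ y :: x :: v₂) :=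
      List.Perm.append_left v₁ (List.Perm.swap y x v₂)
    simp only [List.cons_append, asc, List.append_eq]
    rw [hperm.countP_eq, ih]
    omega

theorem sorted_or_split (u : List (I × ℤ)) :
    sortedD u ∨ ∃ (v₁ : List (I × ℤ)) (x y : I × ℤ) (v₂ : List (I × ℤ)),
      u = v₁ ++ x :: y :: v₂ ∧ x.2 < y.2 := by
  induction u with
  | nil => exact Or.inl List.isChain_nil
  | cons x t ih =>
    match t, ih with
    | [], _ => exact Or.inl (List.isChain_singleton x)
    | y :: t, ih =>
      by_cases hxy : x.2 < y.2
      · exact Or.inr ⟨[], x, y, t, rfl, hxy⟩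
      · rcases ih with hs | ⟨v₁, a, b, v₂, he, hab⟩
        · exact Or.inl (List.isChain_cons_cons.mpr ⟨by omega, hs⟩)
        · exact Or.inr ⟨x :: v₁, a, b, v₂, by rw [he]; rfl, hab⟩

theorem sorted_head_ge {x : I × ℤ} {u : List (I × ℤ)} (h : sortedD (x :: u)) :
    ∀ y ∈ u, y.2 ≤ x.2 := by
  induction u generalizing x with
  | nil => simp
  | cons z t ih =>
    simp only [sortedD, List.Chain'] at h; rw [List.isChain_cons_cons] at h
    intro y hy
    rcases List.mem_cons.mp hy with rfl | hy
    · exact h.1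
    · exact le_trans (ih h.2 y hy) h.1

theorem sorted_tail {x : I × ℤ} {u : List (I × ℤ)} (h : sortedD (x :: u)) : sortedD u :=
  (List.isChain_cons.mp h).2

def Qp (i : I) (u : List (I × ℤ)) : Prop :=
  ∀ p q : I × ℤ, [p, q].Sublist u → p.1 ≠ i → q.1 = p.1 → q.2 ≠ p.2 + 1

theorem pair_sublist_cases {p q z : I × ℤ} {l : List (I × ℤ)}
    (h : [p, q].Sublist (z :: l)) : (p = z ∧ [q].Sublist l) ∨ [p, q].Sublist l := by
  cases h with
  | cons _ h => exact Or.inr h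
  | cons_cons _ h => exact Or.inl ⟨rfl, h⟩

theorem single_sublist_cases {q z : I × ℤ} {l : List (I × ℤ)}
    (h : [q].Sublist (z :: l)) : q = z ∨ [q].Sublist l := by
  cases h with
  | cons _ h => exact Or.inr h
  | cons_cons _ h => exact Or.inl rfl

theorem sublist_swap {v₁ v₂ : List (I × ℤ)} {p q x y : I × ℤ}
    (h : [p, q].Sublist (v₁ ++ y :: x :: v₂)) :
    [p, q].Sublist (v₁ ++ x :: y :: v₂) ∨ (p = y ∧ q = x) := by
  induction v₁ with
  | nil =>
    simp only [List.nil_append] at *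
    rcases pair_sublist_cases h with ⟨rfl, h1⟩ | h1
    · rcases single_sublist_cases h1 with rfl | h2
      · exact Or.inr ⟨rfl, rfl⟩
      · exact Or.inl (List.Sublist.cons x (List.Sublist.cons₂ p h2))
    · rcases pair_sublist_cases h1 with ⟨rfl, h2⟩ | h2
      · exact Or.inl (List.Sublist.cons₂ p (List.Sublist.cons y h2))
      · exact Or.inl ((h2.cons y).cons x)
  | cons z v₁ ih =>
    rcases pair_sublist_cases h with ⟨rfl, h1⟩ | h1
    · refine Or.inl ?_
      have hq : q ∈ v₁ ++ y :: x :: v₂ := List.singleton_sublist.mp h1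
      have hq' : q ∈ v₁ ++ x :: y :: v₂ := by
        have hp := (List.Perm.append_left v₁ (List.Perm.swap y x v₂))
        exact hp.mem_iff.mpr hq
      exact List.Sublist.cons₂ p (List.singleton_sublist.mpr hq')
    · rcases ih h1 with h2 | h2
      · exact Or.inl (h2.cons z)
      · exact Or.inr h2

theorem sublist_of_reduced {v₁ v₂ : List (I × ℤ)} {p q x y : I × ℤ}
    (h : [p, q].Sublist (v₁ ++ v₂)) : [p, q].Sublist (v₁ ++ x :: y :: v₂) :=
  h.trans ((List.Sublist.refl v₁).append ((List.sublist_cons_self y v₂).trans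
    (List.sublist_cons_self x _)))

theorem tw_eq_filter {u : List (I × ℤ)} {b : ℤ} (hs : sortedD u)
    (hb : ∀ x ∈ u, x.2 ≤ b) :
    u.takeWhile (fun x => decide (x.2 = b)) = u.filter (fun x => decide (x.2 = b)) := by
  induction u with
  | nil => rfl
  | cons x t ih =>
    by_cases hx : x.2 = b
    · have hd : (decide (x.2 = b)) = true := by simp [hx]
      rw [List.takeWhile_cons, List.filter_cons, hd]
      simp only [if_true]
      rw [ih (sorted_tail hs) (fun y hy => hb y (List.mem_cons_of_mem _ hy))]
    · have hd : (decide (x.2 = b)) = false := by simp [hx]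
      have hlt : ∀ y ∈ t, ¬ (y.2 = b) := by
        intro y hy
        have h1 := sorted_head_ge hs y hy
        have h2 := hb x (List.mem_cons_self)
        omega
      rw [List.takeWhile_cons, List.filter_cons, hd]
      simp only [Bool.false_eq_true, if_false]
      rw [List.filter_eq_nil_iff.mpr (by intro a ha; simpa using hlt a ha)]

theorem sorted_dropWhile {u : List (I × ℤ)} (p : I × ℤ → Bool) (hs : sortedD u) :
    sortedD (u.dropWhile p) := by
  induction u with
  | nil => exact List.isChain_nil
  | cons x t ih =>
    rw [List.dropWhile_cons]
    by_cases hx : p x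
    · simp only [hx, if_true]; exact ih (sorted_tail hs)
    · simp only [hx, Bool.false_eq_true, if_false]; exact hs

theorem dropWhile_bound {u : List (I × ℤ)} {b : ℤ} (hs : sortedD u)
    (hb : ∀ x ∈ u, x.2 ≤ b) :
    ∀ y ∈ u.dropWhile (fun x => decide (x.2 = b)), y.2 ≤ b - 1 := by
  induction u with
  | nil => simp
  | cons x t ih =>
    rw [List.dropWhile_cons]
    by_cases hx : x.2 = b
    · have hd : (decide (x.2 = b)) = true := by simp [hx]
      rw [hd]
      simp only [if_true]
      exact ih (sorted_tail hs) (fun y hy => hb y (List.mem_cons_of_mem _ hy))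
    · have hd : (decide (x.2 = b)) = false := by simp [hx]
      rw [hd]
      simp only [Bool.false_eq_true, if_false]
      intro y hy
      rcases List.mem_cons.mp hy with rfl | hy
      · have := hb y (List.mem_cons_self); omega
      · have h1 := sorted_head_ge hs y hy
        have h2 := hb x (List.mem_cons_self)
        omega

theorem filter_append_of_level {l₁ l₂ : List (I × ℤ)} {b k : ℤ}
    (h : ∀ x ∈ l₁, x.2 = b) (hk : k ≠ b) :
    (l₁ ++ l₂).filter (fun x => decide (x.2 = k)) = l₂.filter (fun x => decide (x.2 = k)) := by
  rw [List.filter_append, List.filter_eq_nil_iff.mpr ?_, List.nil_append]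
  intro a ha
  have := h a ha
  simp only [this, decide_eq_true_eq]
  omega

theorem takeWhile_level {u : List (I × ℤ)} {b : ℤ} :
    ∀ x ∈ u.takeWhile (fun x => decide (x.2 = b)), x.2 = b := by
  intro x hx
  have := List.mem_takeWhile_imp hx
  simpa using this

end S4

set_option linter.unusedSectionVars false

namespace S4
open List

variable {I : Type} [Fintype I] [DecidableEq I] (A : CartanDatum I)

noncomputable def prodW (L : List (I × ℤ)) : Ahat A := (L.map (fun p => fgen A p.1 p.2)).prod

@[simp] theorem prodW_nil : prodW A ([] : List (I × ℤ)) = 1 := rfl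

theorem prodW_cons (x : I × ℤ) (L : List (I × ℤ)) :
    prodW A (x :: L) = fgen A x.1 x.2 * prodW A L := by
  simp [prodW]

theorem prodW_append (l₁ l₂ : List (I × ℤ)) :
    prodW A (l₁ ++ l₂) = prodW A l₁ * prodW A l₂ := by
  simp [prodW]

theorem prodW_replicate (n : ℕ) (i : I) (m : ℤ) :
    prodW A (List.replicate n (i, m)) = fgen A i m ^ n := by
  induction n with
  | zero => simp
  | succ n ih => rw [List.replicate_succ, prodW_cons, ih, pow_succ']

theorem boson_eq (a b : I) (m p : ℤ) (h : m < p) :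
    fgen A a m * fgen A b p =
      (qq ^ ((-1 : ℤ) ^ (p - m + 1).natAbs * A.form (alphaF a) (alphaF b))) •
          (fgen A b p * fgen A a m) +
        (if b = a ∧ p = m + 1 then ((1 : kk) - qi A a ^ 2) • (1 : Ahat A) else 0) := by
  have hrel := RingQuot.mkAlgHom_rel kk (AhatRel.boson (A := A) a b m p h)
  simp only [map_add, map_mul, map_smul, fgen] at hrel
  rw [apply_ite (RingQuot.mkAlgHom kk (AhatRel A)), map_smul, map_one, map_zero] at hrel
  exact hrel

theorem rewrite_eq (x y : I × ℤ) (h : x.2 < y.2) (v₁ v₂ : List (I × ℤ)) :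
    ∃ c d : kk,
      prodW A (v₁ ++ x :: y :: v₂) =
        c • prodW A (v₁ ++ y :: x :: v₂) + d • prodW A (v₁ ++ v₂) ∧
      (¬(y.1 = x.1 ∧ y.2 = x.2 + 1) → d = 0) := by
  refine ⟨qq ^ ((-1 : ℤ) ^ (y.2 - x.2 + 1).natAbs * A.form (alphaF x.1) (alphaF y.1)),
    if y.1 = x.1 ∧ y.2 = x.2 + 1 then (1 : kk) - qi A x.1 ^ 2 else 0, ?_, ?_⟩
  · have hb := boson_eq A x.1 y.1 x.2 y.2 h
    have hD : (if y.1 = x.1 ∧ y.2 = x.2 + 1 then ((1 : kk) - qi A x.1 ^ 2) • (1 : Ahat A) else 0)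
        = (if y.1 = x.1 ∧ y.2 = x.2 + 1 then (1 : kk) - qi A x.1 ^ 2 else 0) • (1 : Ahat A) := by
      by_cases hc : y.1 = x.1 ∧ y.2 = x.2 + 1 <;> simp [hc]
    rw [hD] at hb
    rw [prodW_append A v₁ (x :: y :: v₂), prodW_cons, prodW_cons,
        prodW_append A v₁ (y :: x :: v₂), prodW_cons, prodW_cons, prodW_append A v₁ v₂,
        ← mul_assoc (fgen A x.1 x.2) (fgen A y.1 y.2) (prodW A v₂), hb]
    simp only [add_mul, mul_add, smul_mul_assoc, mul_smul_comm, one_mul, mul_assoc]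
  · intro hc
    simp [if_neg hc]

theorem wtList_level {L : List (I × ℤ)} {k : ℤ} (h : ∀ x ∈ L, x.2 = k) (j : I) :
    wtList L j = (-(-1 : ℤ) ^ k.natAbs) * (L.countP (fun x => decide (x.1 = j)) : ℤ) := by
  induction L with
  | nil => simp [wtList]
  | cons x t ih =>
    have hx := h x (List.mem_cons_self)
    have ht := fun y hy => h y (List.mem_cons_of_mem _ hy)
    simp only [wtList, List.map_cons, List.sum_cons, List.countP_cons] at *
    rw [ih ht]
    by_cases hj : x.1 = j
    · simp only [hj, if_pos rfl, hx, decide_eq_true_eq]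
      simp
      push_cast
      ring
    · simp only [if_neg hj]
      have : (decide (x.1 = j)) = false := by simp [hj]
      rw [this]
      simp

theorem mem_subAB {L : List (I × ℤ)} {k : ℤ} (h : ∀ x ∈ L, x.2 = k) :
    prodW A L ∈ subAB A k k := by
  induction L with
  | nil => exact (subAB A k k).one_mem
  | cons x t ih =>
    rw [prodW_cons]
    refine mul_mem ?_ (ih (fun y hy => h y (List.mem_cons_of_mem _ hy)))
    exact Algebra.subset_adjoin ⟨x.1, x.2, ⟨by rw [h x (List.mem_cons_self)],
      by rw [h x (List.mem_cons_self)]⟩, rfl⟩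

theorem mem_wtSpace (L : List (I × ℤ)) : prodW A L ∈ wtSpace A (wtList L) :=
  Submodule.subset_span ⟨L, rfl, rfl⟩

theorem descProd_eq (g : ℤ → Ahat A) (a b : ℤ) :
    descProd A g a b = ((List.range (b+1-a).toNat).map (fun t : ℕ => g (b - (t:ℤ)))).prod := by
  unfold descProd
  rw [show (do let x ← List.range (b+1-a).toNat; pure ((x:ℕ):ℤ))
      = (List.range (b+1-a).toNat).map (fun t : ℕ => ((t:ℕ):ℤ)) from List.map_eq_flatMap.symm]
  rw [List.map_map]
  rfl

theorem descProd_congr (g g' : ℤ → Ahat A) (a b : ℤ)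
    (h : ∀ k, a ≤ k → k ≤ b → g k = g' k) : descProd A g a b = descProd A g' a b := by
  rw [descProd_eq, descProd_eq]
  congr 1
  apply List.map_congr_left
  intro t ht
  have ht' := List.mem_range.mp ht
  have : (t : ℤ) < b + 1 - a := by omega
  exact h (b - t) (by omega) (by omega)

theorem descProd_step (g : ℤ → Ahat A) (a b : ℤ) (n : ℕ) (hn : (b + 1 - a).toNat = n + 1) :
    descProd A g a b = g b * descProd A g a (b - 1) := by
  rw [descProd_eq, descProd_eq]
  have h2 : (b - 1 + 1 - a).toNat = n := by omega
  rw [hn, h2, List.range_succ_eq_map, List.map_cons, List.map_map, List.prod_cons]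
  congr 1
  · norm_num
  · congr 1
    apply List.map_congr_left
    intro t _
    simp only [Function.comp_apply]
    congr 1
    push_cast
    ring

theorem prodW_eq_descProd (n : ℕ) : ∀ (u : List (I × ℤ)) (a b : ℤ),
    (b + 1 - a).toNat = n → sortedD u → (∀ x ∈ u, a ≤ x.2 ∧ x.2 ≤ b) →
    descProd A (fun k => prodW A (u.filter (fun x => decide (x.2 = k)))) a b = prodW A u := by
  induction n with
  | zero =>
    intro u a b hn hs hb
    have hu : u = [] := by
      cases u with
      | nil => rfl
      | cons x t => exact absurd (hb x (List.mem_cons_self)) (by omega)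
    subst hu
    rw [descProd_eq, hn]
    simp
  | succ n ih =>
    intro u a b hn hs hb
    rw [descProd_step A _ a b n hn]
    set tw := u.takeWhile (fun x => decide (x.2 = b)) with htw
    set dw := u.dropWhile (fun x => decide (x.2 = b)) with hdw
    have hsplit : u = tw ++ dw := List.takeWhile_append_dropWhile.symm
    have htwlev : ∀ x ∈ tw, x.2 = b := takeWhile_level
    have hdws : sortedD dw := sorted_dropWhile _ hs
    have hdwb : ∀ x ∈ dw, a ≤ x.2 ∧ x.2 ≤ b - 1 := by
      intro x hx
      refine ⟨(hb x (by rw [hsplit]; exact List.mem_append_right _ hx)).1, ?_⟩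
      exact dropWhile_bound hs (fun z hz => (hb z hz).2) x hx
    have hfilters : ∀ k, a ≤ k → k ≤ b - 1 →
        u.filter (fun x => decide (x.2 = k)) = dw.filter (fun x => decide (x.2 = k)) := by
      intro k _ hk
      conv_lhs => rw [hsplit]
      exact filter_append_of_level htwlev (by omega)
    rw [descProd_congr A _ (fun k => prodW A (dw.filter (fun x => decide (x.2 = k)))) a (b - 1)
      (fun k h1 h2 => by rw [hfilters k h1 h2])]
    rw [ih dw a (b - 1) (by omega) hdws hdwb]
    have hfb : u.filter (fun x => decide (x.2 = b)) = tw := by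
      rw [htw, tw_eq_filter hs (fun z hz => (hb z hz).2)]
    rw [hfb]
    conv_rhs => rw [hsplit]
    rw [prodW_append]

theorem M_sorted_zero (M : Ahat A →ₗ[kk] kk) (hM : IsProjM A M)
    {u : List (I × ℤ)} (hs : sortedD u) (hne : u ≠ []) : M (prodW A u) = 0 := by
  obtain ⟨x, t, rfl⟩ := List.exists_cons_of_ne_nil hne
  set u := x :: t with hu
  set b := x.2 with hbdef
  set a := (u.getLast (by simp [hu])).2 with hadef
  have hbound : ∀ z ∈ u, a ≤ z.2 ∧ z.2 ≤ b := by
    have hle : ∀ z ∈ u, z.2 ≤ b := by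
      intro z hz
      rcases List.mem_cons.mp hz with rfl | hz
      · exact le_refl _
      · exact sorted_head_ge hs z hz
    have hge : ∀ (v : List (I × ℤ)) (hv : v ≠ []), sortedD v →
        ∀ z ∈ v, (v.getLast hv).2 ≤ z.2 := by
      intro v
      induction v with
      | nil => simp
      | cons w s ihv =>
        intro _ hvs z hz
        cases s with
        | nil => simp at hz; simp [hz]
        | cons w' s' =>
          rw [List.getLast_cons (by simp)]
          rcases List.mem_cons.mp hz with rfl | hz
          · calc ((w' :: s').getLast (by simp)).2
                ≤ w'.2 := ihv (by simp) (sorted_tail hvs) w' (List.mem_cons_self)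
              _ ≤ z.2 := (List.isChain_cons_cons.mp hvs).1
          · exact ihv (by simp) (sorted_tail hvs) z hz
    exact fun z hz => ⟨hge u (by simp [hu]) hs z hz, hle z hz⟩
  have hab : a ≤ b := (hbound x (List.mem_cons_self)).1
  have hkey := hM.2 a b (fun k => wtList (u.filter (fun z => decide (z.2 = k))))
    ⟨b, hab, le_refl b, ?_⟩
    (fun k => prodW A (u.filter (fun z => decide (z.2 = k)))) ?_
  · rw [prodW_eq_descProd A (b + 1 - a).toNat u a b rfl hs hbound] at hkey
    exact hkey
  · -- β b ≠ 0
    intro hzero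
    have hzero' : wtList (u.filter (fun z => decide (z.2 = b))) = 0 := hzero
    have hxmem : x ∈ u.filter (fun z => decide (z.2 = b)) :=
      List.mem_filter.mpr ⟨List.mem_cons_self, by simp [hbdef]⟩
    have hval := congrFun hzero' x.1
    rw [wtList_level (fun z hz => by simpa using (List.mem_filter.mp hz).2) x.1] at hval
    have hcount : 0 < (u.filter (fun z => decide (z.2 = b))).countP
        (fun z => decide (z.1 = x.1)) := by
      rw [List.countP_pos_iff]
      exact ⟨x, hxmem, by simp⟩
    have hne1 : (-(-1 : ℤ) ^ b.natAbs) ≠ 0 := by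
      simp only [ne_eq, neg_eq_zero]
      exact pow_ne_zero _ (by norm_num)
    have := mul_eq_zero.mp hval
    rcases this with h1 | h1
    · exact hne1 h1
    · omega
  · intro k _ _
    have hlev : ∀ z ∈ u.filter (fun w => decide (w.2 = k)), z.2 = k :=
      fun z hz => by simpa using (List.mem_filter.mp hz).2
    exact ⟨mem_subAB A hlev, mem_wtSpace A _⟩

end S4

set_option linter.unusedSectionVars false
set_option maxHeartbeats 1000000
set_option synthInstance.maxHeartbeats 1000000

namespace S4
open List

variable {I : Type} [Fintype I] [DecidableEq I] (A : CartanDatum I)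

theorem msr_swap (v₁ v₂ : List (I × ℤ)) (x y : I × ℤ) (h : x.2 < y.2) :
    msr (v₁ ++ y :: x :: v₂) + 1 = msr (v₁ ++ x :: y :: v₂) := by
  unfold msr
  rw [asc_swap v₁ v₂ x y h]
  have : (v₁ ++ y :: x :: v₂).length = (v₁ ++ x :: y :: v₂).length := by simp
  rw [this]
  omega

theorem msr_red (v₁ v₂ : List (I × ℤ)) (x y : I × ℤ) :
    msr (v₁ ++ v₂) < msr (v₁ ++ x :: y :: v₂) := by
  unfold msr
  have h1 := asc_le (v₁ ++ v₂)
  have hL : (v₁ ++ x :: y :: v₂).length = (v₁ ++ v₂).length + 2 := by simp; omega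
  rw [hL]
  set L := (v₁ ++ v₂).length
  have hcube : L ^ 3 + L ^ 2 < (L + 2) ^ 3 := by nlinarith
  linarith

theorem pair_in_middle (v₁ v₂ : List (I × ℤ)) (x y : I × ℤ) :
    [x, y].Sublist (v₁ ++ x :: y :: v₂) :=
  List.Sublist.trans
    (List.Sublist.cons₂ x (List.Sublist.cons₂ y (List.nil_sublist v₂)))
    (List.sublist_append_right v₁ _)

theorem Qp_swap {i : I} {v₁ v₂ : List (I × ℤ)} {x y : I × ℤ} (hxy : x.2 < y.2)
    (hq : Qp i (v₁ ++ x :: y :: v₂)) : Qp i (v₁ ++ y :: x :: v₂) := by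
  intro p q hsub hp hq1
  rcases sublist_swap hsub with h | ⟨rfl, rfl⟩
  · exact hq p q h hp hq1
  · omega

theorem Qp_red {i : I} {v₁ v₂ : List (I × ℤ)} {x y : I × ℤ}
    (hq : Qp i (v₁ ++ x :: y :: v₂)) : Qp i (v₁ ++ v₂) := by
  intro p q hsub hp hq1
  exact hq p q (sublist_of_reduced hsub) hp hq1

theorem kill (i : I) (M : Ahat A →ₗ[kk] kk) (hM : IsProjM A M) :
    ∀ u : List (I × ℤ), Qp i u → (∃ z ∈ u, z.1 ≠ i) → M (prodW A u) = 0 := by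
  suffices H : ∀ n (u : List (I × ℤ)), msr u ≤ n → Qp i u → (∃ z ∈ u, z.1 ≠ i) →
      M (prodW A u) = 0 by
    exact fun u hq hz => H (msr u) u le_rfl hq hz
  intro n
  induction n with
  | zero =>
    intro u hm hq hz
    exfalso
    have hpos : u.length = 0 := by
      by_contra hne
      have h1 : 0 < u.length := Nat.pos_of_ne_zero hne
      have h2 : 0 < u.length ^ 3 := pow_pos h1 3
      have h3 : u.length ^ 3 ≤ 0 := le_trans (Nat.le_add_right _ _) (by simpa [msr] using hm)
      omega
    rcases hz with ⟨z, hzmem, _⟩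
    rw [List.length_eq_zero_iff.mp hpos] at hzmem
    simp at hzmem
  | succ n ih =>
    intro u hm hq hz
    rcases sorted_or_split u with hs | ⟨v₁, x, y, v₂, rfl, hxy⟩
    · refine M_sorted_zero A M hM hs ?_
      rintro rfl
      rcases hz with ⟨z, hzmem, _⟩
      simp at hzmem
    · obtain ⟨c, d, hE, hd0⟩ := rewrite_eq A x y hxy v₁ v₂
      have hMeq : M (prodW A (v₁ ++ x :: y :: v₂)) =
          c * M (prodW A (v₁ ++ y :: x :: v₂)) + d * M (prodW A (v₁ ++ v₂)) := by
        rw [hE, map_add, map_smul, map_smul, smul_eq_mul, smul_eq_mul]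
      have hswap0 : M (prodW A (v₁ ++ y :: x :: v₂)) = 0 := by
        refine ih (v₁ ++ y :: x :: v₂) ?_ (Qp_swap hxy hq) ?_
        · have := msr_swap v₁ v₂ x y hxy
          omega
        · rcases hz with ⟨z, hzmem, hzne⟩
          refine ⟨z, ?_, hzne⟩
          have hperm : (v₁ ++ x :: y :: v₂).Perm (v₁ ++ y :: x :: v₂) :=
            List.Perm.append_left v₁ (List.Perm.swap y x v₂)
          exact hperm.subset hzmem
      rw [hMeq, hswap0, mul_zero, zero_add]
      by_cases hc : y.1 = x.1 ∧ y.2 = x.2 + 1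
      · -- x.1 = i, reduced term
        have hxi : x.1 = i := by
          by_contra hxi
          exact hq x y (pair_in_middle v₁ v₂ x y) hxi hc.1 hc.2
        have hred0 : M (prodW A (v₁ ++ v₂)) = 0 := by
          refine ih (v₁ ++ v₂) ?_ (Qp_red hq) ?_
          · have := msr_red v₁ v₂ x y
            omega
          · rcases hz with ⟨z, hzmem, hzne⟩
            refine ⟨z, ?_, hzne⟩
            rcases List.mem_append.mp hzmem with h1 | h1
            · exact List.mem_append_left _ h1
            · rcases List.mem_cons.mp h1 with rfl | h1
              · exact absurd hxi hzne
              · rcases List.mem_cons.mp h1 with rfl | h1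
                · exact absurd (hc.1.trans hxi) hzne
                · exact List.mem_append_right _ h1
        rw [hred0, mul_zero]
      · rw [hd0 hc, zero_mul]

/-! ## Expansion words of `T` applied to a sorted word -/

inductive Exp (i : I) : List (I × ℤ) → List (I × ℤ) → Prop
  | nil : Exp i [] []
  | ieq (m : ℤ) (w u : List (I × ℤ)) : Exp i w u → Exp i ((i, m) :: w) ((i, m + 1) :: u)
  | jne (j : I) (m : ℤ) (r s : ℕ) (w u : List (I × ℤ)) : j ≠ i → Exp i w u →
      Exp i ((j, m) :: w)
        (List.replicate r (i, m) ++ (j, m) :: (List.replicate s (i, m) ++ u))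

theorem exp_levels {i : I} {w u : List (I × ℤ)} (h : Exp i w u) :
    ∀ m : ℤ, (∀ z ∈ w, z.2 ≤ m) → ∀ z ∈ u, z.1 ≠ i → z.2 ≤ m := by
  induction h with
  | nil => intro m _ z hz; simp at hz
  | ieq k w u hexp ihe =>
    intro m hw z hz hzi
    rcases List.mem_cons.mp hz with rfl | hz
    · exact absurd rfl hzi
    · exact ihe m (fun p hp => hw p (List.mem_cons_of_mem _ hp)) z hz hzi
  | jne j k r s w u hj hexp ihe =>
    intro m hw z hz hzi
    rcases List.mem_append.mp hz with h1 | h1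
    · exact absurd (List.eq_of_mem_replicate h1 ▸ rfl) hzi
    · rcases List.mem_cons.mp h1 with rfl | h1
      · exact hw _ (List.mem_cons_self)
      · rcases List.mem_append.mp h1 with h2 | h2
        · exact absurd (List.eq_of_mem_replicate h2 ▸ rfl) hzi
        · exact ihe m (fun p hp => hw p (List.mem_cons_of_mem _ hp)) z h2 hzi

theorem pair_eq_append {α : Type*} {p q : α} {l₁ l₂ : List α} (h : [p, q] = l₁ ++ l₂) :
    (l₁ = [] ∧ l₂ = [p, q]) ∨ (l₁ = [p] ∧ l₂ = [q]) ∨ (l₁ = [p, q] ∧ l₂ = []) := by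
  match l₁, h with
  | [], h => exact Or.inl ⟨rfl, h.symm⟩
  | [a], h =>
    simp only [List.cons_append, List.nil_append] at h
    injection h with h1 h2
    exact Or.inr (Or.inl ⟨by rw [h1], h2.symm⟩)
  | a :: b :: t, h =>
    simp only [List.cons_append] at h
    injection h with h1 h2
    injection h2 with h3 h4
    have : t ++ l₂ = [] := h4.symm
    rcases List.append_eq_nil_iff.mp this with ⟨rfl, rfl⟩
    exact Or.inr (Or.inr ⟨by rw [h1, h3], rfl⟩)

theorem exp_Qp {i : I} {w u : List (I × ℤ)} (h : Exp i w u) (hs : sortedD w) : Qp i u := by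
  induction h with
  | nil =>
    intro p q hsub
    have := hsub.length_le
    simp at this
  | ieq m w u hexp ihe =>
    intro p q hsub hp hq
    rcases pair_sublist_cases hsub with ⟨rfl, _⟩ | h1
    · exact absurd rfl hp
    · exact ihe (sorted_tail hs) p q h1 hp hq
  | jne j m r s w u hj hexp ihe =>
    intro p q hsub hp hq
    rw [List.sublist_append_iff] at hsub
    obtain ⟨l₁, l₂, heq, hl₁, hl₂⟩ := hsub
    rcases pair_eq_append heq with ⟨rfl, rfl⟩ | ⟨⟨rfl, rfl⟩ | ⟨rfl, rfl⟩⟩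
    · -- [p,q] <+ (j,m) :: (replicate s ++ u)
      rcases pair_sublist_cases hl₂ with ⟨rfl, h1⟩ | h1
      · -- p = (j,m), q ∈ replicate s ++ u
        have hqmem : q ∈ List.replicate s (i, m) ++ u := List.singleton_sublist.mp h1
        rcases List.mem_append.mp hqmem with h2 | h2
        · have := List.eq_of_mem_replicate h2
          rw [this] at hq
          exact absurd hq.symm hj  -- hq : q.1 = p.1 i.e. i = j
        · -- q ∈ u with q.1 = j ≠ i : level ≤ m
          have hlev : q.2 ≤ m := by
            refine exp_levels hexp m ?_ q h2 ?_
            · exact fun z hz => sorted_head_ge hs z hz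
            · rw [hq]; exact hp
          intro hcon
          simp at hcon
          omega
      · -- [p,q] <+ replicate s ++ u
        rw [List.sublist_append_iff] at h1
        obtain ⟨m₁, m₂, heq2, hm₁, hm₂⟩ := h1
        rcases pair_eq_append heq2 with ⟨rfl, rfl⟩ | ⟨⟨rfl, rfl⟩ | ⟨rfl, rfl⟩⟩
        · exact ihe (sorted_tail hs) p q hm₂ hp hq
        · have : p ∈ List.replicate s (i, m) := List.singleton_sublist.mp hm₁
          exact absurd (List.eq_of_mem_replicate this ▸ rfl) hp
        · have : p ∈ List.replicate s (i, m) := hm₁.subset (List.mem_cons_self)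
          exact absurd (List.eq_of_mem_replicate this ▸ rfl) hp
    · have : p ∈ List.replicate r (i, m) := List.singleton_sublist.mp hl₁
      exact absurd (List.eq_of_mem_replicate this ▸ rfl) hp
    · have : p ∈ List.replicate r (i, m) := hl₁.subset (List.mem_cons_self)
      exact absurd (List.eq_of_mem_replicate this ▸ rfl) hp

theorem exp_nonI {i : I} {w u : List (I × ℤ)} (h : Exp i w u)
    (hz : ∃ z ∈ w, z.1 ≠ i) : ∃ z ∈ u, z.1 ≠ i := by
  induction h with
  | nil => simpa using hz
  | ieq m w u hexp ihe =>
    rcases hz with ⟨z, hzmem, hzne⟩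
    rcases List.mem_cons.mp hzmem with rfl | h1
    · exact absurd rfl hzne
    · obtain ⟨z', h1', h2'⟩ := ihe ⟨z, h1, hzne⟩
      exact ⟨z', List.mem_cons_of_mem _ h1', h2'⟩
  | jne j m r s w u hj hexp ihe =>
    exact ⟨(j, m), List.mem_append_right _ (List.mem_cons_self), hj⟩

end S4

set_option linter.unusedSectionVars false
set_option maxHeartbeats 1000000
set_option synthInstance.maxHeartbeats 1000000

namespace S4
open List

variable {I : Type} [Fintype I] [DecidableEq I] (A : CartanDatum I)

noncomputable def WSpan (S : Set (List (I × ℤ))) : Submodule kk (Ahat A) :=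
  Submodule.span kk (prodW A '' S)

theorem mem_WSpan {S : Set (List (I × ℤ))} {u : List (I × ℤ)} (hu : u ∈ S) :
    prodW A u ∈ WSpan A S :=
  Submodule.subset_span ⟨u, hu, rfl⟩

theorem WSpan_mono {S S' : Set (List (I × ℤ))} (h : S ⊆ S') : WSpan A S ≤ WSpan A S' :=
  Submodule.span_mono (Set.image_mono h)

theorem mul_WSpan {S : Set (List (I × ℤ))} (seg : List (I × ℤ)) {z : Ahat A}
    (hz : z ∈ WSpan A S) :
    prodW A seg * z ∈ WSpan A ((fun u => seg ++ u) '' S) := by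
  induction hz using Submodule.span_induction with
  | mem x hx =>
    obtain ⟨u, hu, rfl⟩ := hx
    rw [← prodW_append]
    exact mem_WSpan A ⟨u, hu, rfl⟩
  | zero => rw [mul_zero]; exact zero_mem _
  | add x y _ _ ihx ihy => rw [mul_add]; exact add_mem ihx ihy
  | smul c x _ ihx => rw [mul_smul_comm]; exact Submodule.smul_mem _ _ ihx

theorem Fdiv_prod (i j : I) (m : ℤ) (r s : ℕ) :
    ∃ c : kk, Fdiv A i m r * fgen A j m * Fdiv A i m s =
      c • prodW A (List.replicate r (i, m) ++ (j, m) :: List.replicate s (i, m)) := by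
  refine ⟨((sqi A i * (1 - qi A i ^ 2)⁻¹) ^ r / qfact (qi A i) r) *
    ((sqi A i * (1 - qi A i ^ 2)⁻¹) ^ s / qfact (qi A i) s), ?_⟩
  unfold Fdiv
  rw [smul_mul_assoc, smul_mul_assoc, mul_smul_comm, smul_smul,
    prodW_append, prodW_cons, prodW_replicate, prodW_replicate, mul_assoc]

theorem T_expand (i : I) (T : Ahat A ≃ₐ[kk] Ahat A) (hT : IsBraidT A i T) :
    ∀ w : List (I × ℤ), T (prodW A w) ∈ WSpan A {u | Exp i w u} := by
  intro w
  induction w with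
  | nil =>
    rw [prodW_nil, map_one, ← prodW_nil A]
    exact mem_WSpan A (show Exp i [] [] from Exp.nil)
  | cons x w ih =>
    obtain ⟨x1, x2⟩ := x
    rw [prodW_cons, map_mul]
    by_cases hx : x1 = i
    · subst hx
      rw [hT.1 x2]
      have h1 : fgen A x1 (x2 + 1) = prodW A [(x1, x2 + 1)] := by
        rw [prodW_cons, prodW_nil, mul_one]
      rw [h1]
      refine WSpan_mono A ?_ (mul_WSpan A [(x1, x2 + 1)] ih)
      rintro _ ⟨u, hu, rfl⟩
      exact Exp.ieq x2 w u hu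
    · rw [hT.2 x1 hx x2, Finset.sum_mul]
      refine Submodule.sum_mem _ ?_
      intro r hr
      rw [smul_mul_assoc]
      refine Submodule.smul_mem _ _ ?_
      obtain ⟨c, hc⟩ := Fdiv_prod A i x1 x2 r ((-A.c i x1).toNat - r)
      rw [hc, smul_mul_assoc]
      refine Submodule.smul_mem _ _ ?_
      refine WSpan_mono A ?_ (mul_WSpan A _ ih)
      rintro _ ⟨u, hu, rfl⟩
      show Exp i ((x1, x2) :: w) _
      have h2 := Exp.jne x1 x2 r ((-A.c i x1).toNat - r) w u hx hu
      simpa [List.append_assoc, List.cons_append] using h2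

theorem T_alli (i : I) (T : Ahat A ≃ₐ[kk] Ahat A) (hT : IsBraidT A i T) :
    ∀ w : List (I × ℤ), (∀ z ∈ w, z.1 = i) →
      T (prodW A w) = prodW A (w.map (fun z => (i, z.2 + 1))) := by
  intro w
  induction w with
  | nil => intro _; rw [prodW_nil, map_one, List.map_nil, prodW_nil]
  | cons x w ih =>
    intro h
    rw [prodW_cons, map_mul, ih (fun z hz => h z (List.mem_cons_of_mem _ hz)),
      List.map_cons, prodW_cons]
    congr 1
    have hx : x.1 = i := h x (List.mem_cons_self)
    rw [hx, hT.1 x.2]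

theorem M_WSpan_zero {S : Set (List (I × ℤ))} (M : Ahat A →ₗ[kk] kk)
    (h : ∀ u ∈ S, M (prodW A u) = 0) : ∀ z ∈ WSpan A S, M z = 0 := by
  intro z hz
  induction hz using Submodule.span_induction with
  | mem x hx => obtain ⟨u, hu, rfl⟩ := hx; exact h u hu
  | zero => exact map_zero M
  | add x y _ _ ihx ihy => rw [map_add, ihx, ihy, add_zero]
  | smul c x _ ihx => rw [map_smul, ihx, smul_zero]

theorem msr_zero_nil {u : List (I × ℤ)} (h : msr u ≤ 0) : u = [] := by
  by_contra hne
  have h1 : 0 < u.length := List.length_pos_iff.mpr hne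
  have h2 : 0 < u.length ^ 3 := pow_pos h1 3
  have h3 : u.length ^ 3 ≤ 0 := le_trans (Nat.le_add_right _ _) (by simpa [msr] using h)
  omega

theorem MT_eq (i : I) (T : Ahat A ≃ₐ[kk] Ahat A) (hT : IsBraidT A i T)
    (M : Ahat A →ₗ[kk] kk) (hM : IsProjM A M) :
    ∀ u : List (I × ℤ), M (T (prodW A u)) = M (prodW A u) := by
  suffices H : ∀ n (u : List (I × ℤ)), msr u ≤ n → M (T (prodW A u)) = M (prodW A u) from
    fun u => H (msr u) u le_rfl
  intro n
  induction n with
  | zero =>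
    intro u hm
    rw [msr_zero_nil hm, prodW_nil, map_one]
  | succ n ih =>
    intro u hm
    rcases sorted_or_split u with hs | ⟨v₁, x, y, v₂, rfl, hxy⟩
    · cases u with
      | nil => rw [prodW_nil, map_one]
      | cons x t =>
        rw [M_sorted_zero A M hM hs (by simp)]
        by_cases hall : ∀ z ∈ (x :: t), z.1 = i
        · rw [T_alli A i T hT _ hall]
          refine M_sorted_zero A M hM ?_ (by simp)
          simp only [sortedD, List.Chain']; rw [List.isChain_map]
          exact List.IsChain.imp (fun a b hab => by simpa using hab) hs
        · push_neg at hall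
          refine M_WSpan_zero A M ?_ _ (T_expand A i T hT (x :: t))
          intro u' hu'
          exact kill A i M hM u' (exp_Qp hu' hs) (exp_nonI hu' hall)
    · obtain ⟨c, d, hE, _⟩ := rewrite_eq A x y hxy v₁ v₂
      have h1 : msr (v₁ ++ y :: x :: v₂) ≤ n := by
        have := msr_swap v₁ v₂ x y hxy; omega
      have h2 : msr (v₁ ++ v₂) ≤ n := by
        have := msr_red v₁ v₂ x y; omega
      rw [hE]
      simp only [map_add, map_smul]
      rw [ih _ h1, ih _ h2]

theorem WSpan_univ_mul {z w : Ahat A} (hz : z ∈ WSpan A Set.univ)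
    (hw : w ∈ WSpan A Set.univ) : z * w ∈ WSpan A Set.univ := by
  induction hz using Submodule.span_induction with
  | mem x hx =>
    obtain ⟨u, -, rfl⟩ := hx
    induction hw using Submodule.span_induction with
    | mem y hy =>
      obtain ⟨v, -, rfl⟩ := hy
      rw [← prodW_append]
      exact mem_WSpan A (Set.mem_univ _)
    | zero => rw [mul_zero]; exact zero_mem _
    | add a b _ _ iha ihb => rw [mul_add]; exact add_mem iha ihb
    | smul c a _ iha => rw [mul_smul_comm]; exact Submodule.smul_mem _ _ iha
  | zero => rw [zero_mul]; exact zero_mem _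
  | add a b _ _ iha ihb => rw [add_mul]; exact add_mem iha ihb
  | smul c a _ iha => rw [smul_mul_assoc]; exact Submodule.smul_mem _ _ iha

theorem span_top : ∀ x : Ahat A, x ∈ WSpan A Set.univ := by
  intro x
  obtain ⟨y, rfl⟩ := RingQuot.mkAlgHom_surjective kk (AhatRel A) x
  induction y using FreeAlgebra.induction with
  | grade0 r =>
    rw [AlgHom.commutes, Algebra.algebraMap_eq_smul_one]
    refine Submodule.smul_mem _ _ ?_
    rw [← prodW_nil A]
    exact mem_WSpan A (Set.mem_univ _)
  | grade1 p =>
    have h1 : RingQuot.mkAlgHom kk (AhatRel A) (FreeAlgebra.ι kk p) = prodW A [p] := by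
      rw [prodW_cons, prodW_nil, mul_one]
      rfl
    rw [h1]
    exact mem_WSpan A (Set.mem_univ _)
  | mul a b iha ihb =>
    rw [map_mul]
    exact WSpan_univ_mul A iha ihb
  | add a b iha ihb =>
    rw [map_add]
    exact add_mem iha ihb

end S4

/-- For every `i ∈ I` and every `x ∈ Â`, one has `M(T_i(x)) = M(x)`, where
`M : Â → k` is the projection onto the degree-zero component of the triangular
decomposition of `Â`. -/
theorem statement4 {I : Type} [Fintype I] [DecidableEq I] (A : CartanDatum I) (i : I)
    (T : Ahat A ≃ₐ[kk] Ahat A) (hT : IsBraidT A i T)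
    (M : Ahat A →ₗ[kk] kk) (hM : IsProjM A M) :
    ∀ x : Ahat A, M (T x) = M x := by
  intro x
  have hx := S4.span_top A x
  induction hx using Submodule.span_induction with
  | mem z hz =>
    obtain ⟨u, -, rfl⟩ := hz
    exact S4.MT_eq A i T hT M hM u
  | zero => rw [map_zero, map_zero]
  | add a b _ _ iha ihb => simp only [map_add, iha, ihb]
  | smul c a _ iha => simp only [map_smul, iha]
end
end

section
/- Let C be a ring, let X' ⊆ X be right C-modules and Y' ⊆ Y be left C-modules. Assume X and Y are flat, and that either X/X' or Y/Y' is flat. Then: (i) the natural maps X'⊗_C Y' → X'⊗_C Y → X⊗_C Y and X'⊗_C Y' → X⊗_C Y' → X⊗_C Y are all injective; and (ii) inside X⊗_C Y one has (X⊗_C Y') ∩ (X'⊗_C Y) = X'⊗_C Y'. -/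
open TensorProduct

section Aux

variable {C : Type*} [CommRing C]

/-- Chase lemma: if `A → B → Q` is exact with `B → Q` surjective and `Q` flat, and
`K → F → M` is an exact presentation of `M` with `F` flat, then `A ⊗ M → B ⊗ M`
is injective. -/
lemma aux_chase {A B Q : Type*}
    [AddCommGroup A] [AddCommGroup B] [AddCommGroup Q]
    [Module C A] [Module C B] [Module C Q]
    (i : A →ₗ[C] B) (hi : Function.Injective i)
    (p : B →ₗ[C] Q) (hexact : Function.Exact i p)
    (hp : Function.Surjective p) (hQ : Module.Flat C Q)
    {K F M : Type*} [AddCommGroup K] [AddCommGroup F] [AddCommGroup M]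
    [Module C K] [Module C F] [Module C M] [Module.Flat C F]
    (j : K →ₗ[C] F) (hj : Function.Injective j) (g : F →ₗ[C] M) (hg : Function.Surjective g)
    (hexactKF : Function.Exact j g) :
    Function.Injective (i.rTensor M) := by
  rw [← LinearMap.ker_eq_bot, eq_bot_iff]
  intro t ht
  simp only [LinearMap.mem_ker] at ht
  -- lift `t` to `A ⊗ F`
  obtain ⟨s, hs⟩ := LinearMap.lTensor_surjective A hg t
  -- `i.rTensor F s` dies in `B ⊗ M`
  have h1 : g.lTensor B (i.rTensor F s) = 0 := by
    have hnat : (g.lTensor B).comp (i.rTensor F) = (i.rTensor M).comp (g.lTensor A) := by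
      rw [LinearMap.lTensor_comp_rTensor, LinearMap.rTensor_comp_lTensor]
    rw [← LinearMap.comp_apply, hnat, LinearMap.comp_apply, hs, ht]
  -- hence it comes from `B ⊗ K`
  have hex2 : Function.Exact (j.lTensor B) (g.lTensor B) := lTensor_exact B hexactKF hg
  obtain ⟨u, hu⟩ := (hex2 (i.rTensor F s)).mp h1
  -- push `u` to `Q ⊗ K`; it is zero since `Q` is flat
  have h2 : j.lTensor Q (p.rTensor K u) = 0 := by
    have hnat : (j.lTensor Q).comp (p.rTensor K) = (p.rTensor F).comp (j.lTensor B) := by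
      rw [LinearMap.lTensor_comp_rTensor, LinearMap.rTensor_comp_lTensor]
    rw [← LinearMap.comp_apply, hnat, LinearMap.comp_apply, hu, ← LinearMap.comp_apply,
      ← LinearMap.rTensor_comp, hexact.linearMap_comp_eq_zero, LinearMap.rTensor_zero,
      LinearMap.zero_apply]
  haveI := hQ
  have h3 : p.rTensor K u = 0 :=
    Module.Flat.lTensor_preserves_injective_linearMap (M := Q) j hj h2
  -- hence `u` comes from `A ⊗ K`
  have hex3 : Function.Exact (i.rTensor K) (p.rTensor K) := rTensor_exact K hexact hp
  obtain ⟨v, hv⟩ := (hex3 u).mp h3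
  -- now `s = j.lTensor A v` since `F` is flat
  have h4 : i.rTensor F (j.lTensor A v) = i.rTensor F s := by
    have hnat : (i.rTensor F).comp (j.lTensor A) = (j.lTensor B).comp (i.rTensor K) := by
      rw [LinearMap.lTensor_comp_rTensor, LinearMap.rTensor_comp_lTensor]
    rw [← LinearMap.comp_apply, hnat, LinearMap.comp_apply, hv, hu]
  have h5 : s = j.lTensor A v :=
    (Module.Flat.rTensor_preserves_injective_linearMap (M := F) i hi h4).symm
  -- conclude `t = 0`
  have h6 : g.comp j = 0 := by
    ext x
    exact (hexactKF.apply_apply_eq_zero x)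
  rw [← hs, h5, ← LinearMap.comp_apply, ← LinearMap.lTensor_comp, h6, LinearMap.lTensor_zero,
    LinearMap.zero_apply]
  exact Submodule.zero_mem ⊥

set_option maxHeartbeats 1000000 in
/-- If `A → B → Q` is exact with `B → Q` surjective and `Q` flat, then for every module `M`
the map `A ⊗ M → B ⊗ M` is injective. -/
lemma aux_rTensor_injective {A B Q : Type*}
    [AddCommGroup A] [AddCommGroup B] [AddCommGroup Q]
    [Module C A] [Module C B] [Module C Q]
    (i : A →ₗ[C] B) (hi : Function.Injective i)
    (p : B →ₗ[C] Q) (hexact : Function.Exact i p)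
    (hp : Function.Surjective p) (hQ : Module.Flat C Q)
    (M : Type*) [AddCommGroup M] [Module C M] :
    Function.Injective (i.rTensor M) :=
  aux_chase (K := LinearMap.ker (Finsupp.linearCombination C (_root_.id : M → M)))
    (F := M →₀ C) i hi p hexact hp hQ
    (LinearMap.ker (Finsupp.linearCombination C (_root_.id : M → M))).subtype
    (Submodule.injective_subtype (LinearMap.ker (Finsupp.linearCombination C (_root_.id : M → M))))
    (Finsupp.linearCombination C (_root_.id : M → M))
    (Finsupp.linearCombination_id_surjective C M)
    ((Finsupp.linearCombination C (_root_.id : M → M)).exact_subtype_ker_map)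

/-- The `lTensor` variant of `aux_rTensor_injective`. -/
lemma aux_lTensor_injective {A B Q : Type*}
    [AddCommGroup A] [AddCommGroup B] [AddCommGroup Q]
    [Module C A] [Module C B] [Module C Q]
    (i : A →ₗ[C] B) (hi : Function.Injective i)
    (p : B →ₗ[C] Q) (hexact : Function.Exact i p)
    (hp : Function.Surjective p) (hQ : Module.Flat C Q)
    (M : Type*) [AddCommGroup M] [Module C M] :
    Function.Injective (i.lTensor M) := by
  have hr := aux_rTensor_injective i hi p hexact hp hQ M
  have key : ∀ x : M ⊗[C] A,
      i.lTensor M x = (TensorProduct.comm C B M) (i.rTensor M (TensorProduct.comm C M A x)) := by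
    intro x
    induction x using TensorProduct.induction_on with
    | zero => simp
    | tmul m a => simp
    | add x y hx hy => simp [map_add, hx, hy]
  intro x y hxy
  rw [key x, key y] at hxy
  have h1 := (TensorProduct.comm C B M).injective hxy
  have h2 := hr h1
  exact (TensorProduct.comm C M A).injective h2

end Aux

/-- Let `C` be a ring, `X' ⊆ X` and `Y' ⊆ Y` be `C`-modules with `X`
and `Y` flat, and assume that `X/X'` or `Y/Y'` is flat. Then (i) the natural maps
`X' ⊗ Y' → X' ⊗ Y → X ⊗ Y` and `X' ⊗ Y' → X ⊗ Y' → X ⊗ Y` are all injective, and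
(ii) inside `X ⊗ Y` one has `(X ⊗ Y') ∩ (X' ⊗ Y) = X' ⊗ Y'`. -/
theorem statement10 (C : Type*) [CommRing C]
    (X Y : Type*) [AddCommGroup X] [AddCommGroup Y] [Module C X] [Module C Y]
    (X' : Submodule C X) (Y' : Submodule C Y)
    (hX : Module.Flat C X) (hY : Module.Flat C Y)
    (hflat : Module.Flat C (X ⧸ X') ∨ Module.Flat C (Y ⧸ Y')) :
    (Function.Injective
        (TensorProduct.map X'.subtype Y'.subtype : X' ⊗[C] Y' →ₗ[C] X ⊗[C] Y) ∧
      Function.Injective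
        (TensorProduct.map X'.subtype (LinearMap.id : Y →ₗ[C] Y) :
          X' ⊗[C] Y →ₗ[C] X ⊗[C] Y) ∧
      Function.Injective
        (TensorProduct.map (LinearMap.id : X →ₗ[C] X) Y'.subtype :
          X ⊗[C] Y' →ₗ[C] X ⊗[C] Y)) ∧
    LinearMap.range
        (TensorProduct.map (LinearMap.id : X →ₗ[C] X) Y'.subtype :
          X ⊗[C] Y' →ₗ[C] X ⊗[C] Y) ⊓
      LinearMap.range
        (TensorProduct.map X'.subtype (LinearMap.id : Y →ₗ[C] Y) :
          X' ⊗[C] Y →ₗ[C] X ⊗[C] Y) =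
    LinearMap.range
        (TensorProduct.map X'.subtype Y'.subtype : X' ⊗[C] Y' →ₗ[C] X ⊗[C] Y) := by
  haveI := hX; haveI := hY
  -- the two "big" injections, needing only flatness of `X` and `Y`
  have inj2 : Function.Injective
      (TensorProduct.map X'.subtype (LinearMap.id : Y →ₗ[C] Y) :
        X' ⊗[C] Y →ₗ[C] X ⊗[C] Y) :=
    by
      have h : Function.Injective (X'.subtype.rTensor Y) :=
        Module.Flat.rTensor_preserves_injective_linearMap (M := Y) X'.subtype
          X'.injective_subtype
      exact h
  have inj3 : Function.Injective
      (TensorProduct.map (LinearMap.id : X →ₗ[C] X) Y'.subtype :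
        X ⊗[C] Y' →ₗ[C] X ⊗[C] Y) :=
    by
      have h : Function.Injective (Y'.subtype.lTensor X) :=
        Module.Flat.lTensor_preserves_injective_linearMap (M := X) Y'.subtype
          Y'.injective_subtype
      exact h
  -- two factorizations of the map `X' ⊗ Y' → X ⊗ Y`
  have fac1 : (TensorProduct.map X'.subtype Y'.subtype : X' ⊗[C] Y' →ₗ[C] X ⊗[C] Y) =
      (TensorProduct.map (LinearMap.id : X →ₗ[C] X) Y'.subtype).comp
        (X'.subtype.rTensor Y') :=
by
      ext x y
      simp
  have fac2 : (TensorProduct.map X'.subtype Y'.subtype : X' ⊗[C] Y' →ₗ[C] X ⊗[C] Y) =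
      (TensorProduct.map X'.subtype (LinearMap.id : Y →ₗ[C] Y)).comp
        (Y'.subtype.lTensor X') :=
by
      ext x y
      simp
  -- `⊇` inclusion of the intersection, always true
  have hge : LinearMap.range
        (TensorProduct.map X'.subtype Y'.subtype : X' ⊗[C] Y' →ₗ[C] X ⊗[C] Y) ≤
      LinearMap.range
        (TensorProduct.map (LinearMap.id : X →ₗ[C] X) Y'.subtype :
          X ⊗[C] Y' →ₗ[C] X ⊗[C] Y) ⊓
      LinearMap.range
        (TensorProduct.map X'.subtype (LinearMap.id : Y →ₗ[C] Y) :
          X' ⊗[C] Y →ₗ[C] X ⊗[C] Y) := by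
    refine le_inf ?_ ?_
    · rw [fac1]; exact LinearMap.range_comp_le_range _ _
    · rw [fac2]; exact LinearMap.range_comp_le_range _ _
  rcases hflat with hQ | hQ
  · -- case `X ⧸ X'` flat
    have injr : Function.Injective (X'.subtype.rTensor Y') :=
      aux_rTensor_injective X'.subtype X'.injective_subtype X'.mkQ (LinearMap.exact_subtype_mkQ X')
        (Submodule.mkQ_surjective X') hQ Y'
    have inj1 : Function.Injective
        (TensorProduct.map X'.subtype Y'.subtype : X' ⊗[C] Y' →ₗ[C] X ⊗[C] Y) := by
      rw [fac1]; exact inj3.comp injr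
    refine ⟨⟨inj1, inj2, inj3⟩, le_antisymm ?_ hge⟩
    rintro t ⟨⟨a, ha⟩, ⟨b, hb⟩⟩
    -- `t` dies in `(X⧸X') ⊗ Y`
    have h1 : X'.mkQ.rTensor Y t = 0 := by
      rw [← hb]
      have : (X'.mkQ.rTensor Y).comp (X'.subtype.rTensor Y) = 0 := by
        rw [← LinearMap.rTensor_comp, (LinearMap.exact_subtype_mkQ X').linearMap_comp_eq_zero,
          LinearMap.rTensor_zero]
      exact DFunLike.congr_fun this b
    -- hence `a` dies in `(X⧸X') ⊗ Y'`
    have h2 : Y'.subtype.lTensor (X ⧸ X') (X'.mkQ.rTensor Y' a) = 0 := by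
      have hnat : (Y'.subtype.lTensor (X ⧸ X')).comp (X'.mkQ.rTensor Y') =
          (X'.mkQ.rTensor Y).comp (Y'.subtype.lTensor X) := by
        rw [LinearMap.lTensor_comp_rTensor, LinearMap.rTensor_comp_lTensor]
      rw [← LinearMap.comp_apply, hnat, LinearMap.comp_apply]
      have : Y'.subtype.lTensor X a = t := ha
      rw [this, h1]
    have h3 : X'.mkQ.rTensor Y' a = 0 :=
      Module.Flat.lTensor_preserves_injective_linearMap (M := X ⧸ X') Y'.subtype
        Y'.injective_subtype (by simpa using h2)
    -- hence `a` comes from `X' ⊗ Y'`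
    obtain ⟨u, hu⟩ := (rTensor_exact Y' (LinearMap.exact_subtype_mkQ X')
      (Submodule.mkQ_surjective X') a).mp h3
    refine ⟨u, ?_⟩
    rw [fac1, LinearMap.comp_apply, hu]
    exact ha
  · -- case `Y ⧸ Y'` flat
    have injl : Function.Injective (Y'.subtype.lTensor X') :=
      aux_lTensor_injective Y'.subtype Y'.injective_subtype Y'.mkQ (LinearMap.exact_subtype_mkQ Y')
        (Submodule.mkQ_surjective Y') hQ X'
    have inj1 : Function.Injective
        (TensorProduct.map X'.subtype Y'.subtype : X' ⊗[C] Y' →ₗ[C] X ⊗[C] Y) := by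
      rw [fac2]; exact inj2.comp injl
    refine ⟨⟨inj1, inj2, inj3⟩, le_antisymm ?_ hge⟩
    rintro t ⟨⟨a, ha⟩, ⟨b, hb⟩⟩
    -- `t` dies in `X ⊗ (Y⧸Y')`
    have h1 : Y'.mkQ.lTensor X t = 0 := by
      rw [← ha]
      have : (Y'.mkQ.lTensor X).comp (Y'.subtype.lTensor X) = 0 := by
        rw [← LinearMap.lTensor_comp, (LinearMap.exact_subtype_mkQ Y').linearMap_comp_eq_zero,
          LinearMap.lTensor_zero]
      exact DFunLike.congr_fun this a
    -- hence `b` dies in `X' ⊗ (Y⧸Y')`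
    have h2 : X'.subtype.rTensor (Y ⧸ Y') (Y'.mkQ.lTensor X' b) = 0 := by
      have hnat : (X'.subtype.rTensor (Y ⧸ Y')).comp (Y'.mkQ.lTensor X') =
          (Y'.mkQ.lTensor X).comp (X'.subtype.rTensor Y) := by
        rw [LinearMap.lTensor_comp_rTensor, LinearMap.rTensor_comp_lTensor]
      rw [← LinearMap.comp_apply, hnat, LinearMap.comp_apply]
      have : X'.subtype.rTensor Y b = t := hb
      rw [this, h1]
    have h3 : Y'.mkQ.lTensor X' b = 0 :=
      Module.Flat.rTensor_preserves_injective_linearMap (M := Y ⧸ Y') X'.subtype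
        X'.injective_subtype (by simpa using h2)
    -- hence `b` comes from `X' ⊗ Y'`
    obtain ⟨u, hu⟩ := (lTensor_exact X' (LinearMap.exact_subtype_mkQ Y')
      (Submodule.mkQ_surjective Y') b).mp h3
    refine ⟨u, ?_⟩
    rw [fac2, LinearMap.comp_apply, hu]
    exact hb
end

section
/- For every i ∈ I, T_i(Â_{<0}) = Σ_{k≥0} f_{i,0}^k · Â_{<0}, i.e. the image under T_i of the subalgebra Â_{<0} equals the sum over k ≥ 0 of the left translates of Â_{<0} by the powers f_{i,0}^k. -/
noncomputable section
open scoped Classical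
open Finset

variable {I : Type} [Fintype I] [DecidableEq I]

/-! ## Auxiliary lemmas for Statement 11 -/
section Statement11Aux

lemma vv_ne_zero : (vv : kk) ≠ 0 := RatFunc.X_ne_zero

lemma vv_pow_ne_one (k : ℕ) (hk : k ≠ 0) : (vv : kk) ^ k ≠ 1 := by
  intro h
  have : (Polynomial.X : Polynomial ℚ) ^ k = 1 := by
    apply RatFunc.algebraMap_injective (K := ℚ)
    rw [map_pow, map_one, RatFunc.algebraMap_X]
    exact h
  have := congrArg Polynomial.natDegree this
  simp [Polynomial.natDegree_X_pow] at this
  exact hk this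

lemma vv_zpow_inj (a b : ℤ) (h : (vv : kk) ^ a = vv ^ b) : a = b := by
  by_contra hne
  wlog hab : b < a generalizing a b
  · exact this b a h.symm (Ne.symm hne) (by omega)
  have h1 : (vv : kk) ^ (a - b) = 1 := by
    rw [zpow_sub₀ vv_ne_zero, h, div_self (zpow_ne_zero _ vv_ne_zero)]
  have h2 : (vv : kk) ^ (a - b).toNat = 1 := by
    rw [← zpow_natCast, Int.toNat_of_nonneg (by omega)]; exact h1
  exact vv_pow_ne_one _ (by omega) h2

lemma qint_zero (t : kk) : qint t 0 = 0 := by simp [qint]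

lemma qint_succ (t : kk) (ht : t ≠ 0) (k : ℕ) :
    qint t (k + 1) = t ^ (k : ℤ) + t⁻¹ * qint t k := by
  unfold qint
  rw [Finset.sum_range_succ', Finset.mul_sum]
  have hstep : ∀ i : ℕ, t ^ ((((k+1:ℕ)):ℤ) - 1 - 2*(((i+1:ℕ)):ℤ)) = t⁻¹ * t ^ ((k:ℤ) - 1 - 2*(i:ℤ)) := by
    intro i
    rw [← zpow_neg_one t, ← zpow_add₀ ht]
    congr 1
    omega
  rw [Finset.sum_congr rfl (fun i _ => hstep i)]
  have h0' : t ^ ((((k+1:ℕ)):ℤ) - 1 - 2*(((0:ℕ)):ℤ)) = t ^ (k:ℤ) := by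
    congr 1
    omega
  rw [h0', add_comm]

lemma qint_telescope (t : kk) (ht : t ≠ 0) (k : ℕ) :
    (t - t⁻¹) * qint t k = t ^ (k : ℤ) - t ^ (-(k : ℤ)) := by
  induction k with
  | zero => simp [qint_zero]
  | succ k ih =>
    have e1 : t * t ^ (k:ℤ) = t ^ ((k:ℤ)+1) := by rw [zpow_add_one₀ ht, mul_comm]
    have e2 : t⁻¹ * t ^ (k:ℤ) = t ^ ((k:ℤ)-1) := by rw [zpow_sub_one₀ ht, mul_comm]
    have e3 : t⁻¹ * t ^ (-(k:ℤ)) = t ^ (-((k:ℤ)+1)) := by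
      rw [neg_add, zpow_add₀ ht, zpow_neg_one, mul_comm]
    rw [qint_succ t ht, mul_add, ← mul_assoc, mul_comm (t - t⁻¹) t⁻¹, mul_assoc, ih,
      mul_sub, sub_mul, e1, e2, e3]
    push_cast
    ring

lemma qfact_zero (t : kk) : qfact t 0 = 1 := by simp [qfact]

lemma qfact_succ (t : kk) (k : ℕ) : qfact t (k+1) = qfact t k * qint t (k+1) :=
  Finset.prod_range_succ _ _

lemma qfact_ne_zero (t : kk) (hq : ∀ k : ℕ, k ≠ 0 → qint t k ≠ 0) (k : ℕ) :
    qfact t k ≠ 0 := by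
  induction k with
  | zero => simp [qfact_zero]
  | succ k ih => rw [qfact_succ]; exact mul_ne_zero ih (hq (k+1) (by omega))

lemma qb1 (t : kk) (hq : ∀ k : ℕ, k ≠ 0 → qint t k ≠ 0) (r s : ℕ) :
    qbinom t (r+s) r * qint t (r+s+1) = qbinom t (r+s+1) r * qint t (s+1) := by
  unfold qbinom
  have e1 : r + s - r = s := by omega
  have e2 : r + s + 1 - r = s + 1 := by omega
  rw [e1, e2, qfact_succ t (r+s), qfact_succ t s]
  have h1 := qfact_ne_zero t hq r
  have h2 := qfact_ne_zero t hq s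
  have h3 := qfact_ne_zero t hq (r+s)
  have h4 := hq (r+s+1) (by omega)
  have h5 := hq (s+1) (by omega)
  field_simp

lemma qb2 (t : kk) (hq : ∀ k : ℕ, k ≠ 0 → qint t k ≠ 0) (r s : ℕ) :
    qbinom t (r+s+1) (r+1) * qint t (r+1) = qbinom t (r+s+1) r * qint t (s+1) := by
  unfold qbinom
  have e1 : r + s + 1 - (r+1) = s := by omega
  have e2 : r + s + 1 - r = s + 1 := by omega
  rw [e1, e2, qfact_succ t r, qfact_succ t s]
  have h1 := qfact_ne_zero t hq r
  have h2 := qfact_ne_zero t hq s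
  have h3 := qfact_ne_zero t hq (r+s+1)
  have h4 := hq (r+1) (by omega)
  have h5 := hq (s+1) (by omega)
  field_simp

lemma gam (t : kk) (ht : t ≠ 0) (k : ℕ) :
    t ^ (2*k) - 1 = t ^ (k:ℕ) * ((t - t⁻¹) * qint t k) := by
  rw [qint_telescope t ht, mul_sub]
  have e1 : t ^ (k:ℕ) * t ^ (k:ℤ) = t ^ (2*k) := by
    rw [← zpow_natCast t k, ← zpow_add₀ ht, ← zpow_natCast t (2*k)]
    congr 1; omega
  have e2 : t ^ (k:ℕ) * t ^ (-(k:ℤ)) = 1 := by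
    rw [← zpow_natCast t k, ← zpow_add₀ ht]
    simp
  rw [e1, e2]

lemma redid (t : kk) (ht : t ≠ 0) (hq : ∀ k : ℕ, k ≠ 0 → qint t k ≠ 0) (r s c : ℕ) :
    -(t^(s+c+2) * qbinom t (r+s+1) (r+1) * (t^(2*r+2) - 1))
      + t^(r+3*c+4) * qbinom t (r+s+1) r * (t^(2*s+2) - 1)
    = t^(c+2) * qbinom t (r+s) r * (t^(2*c+2) - 1) * (t^(2*r+2*s+2) - 1) := by
  have g1 : t^(2*r+2) - 1 = t ^ (r+1) * ((t - t⁻¹) * qint t (r+1)) := by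
    have := gam t ht (r+1); rw [show 2*(r+1) = 2*r+2 by ring] at this; exact this
  have g2 : t^(2*s+2) - 1 = t ^ (s+1) * ((t - t⁻¹) * qint t (s+1)) := by
    have := gam t ht (s+1); rw [show 2*(s+1) = 2*s+2 by ring] at this; exact this
  have g4 : t^(2*r+2*s+2) - 1 = t ^ (r+s+1) * ((t - t⁻¹) * qint t (r+s+1)) := by
    have := gam t ht (r+s+1); rw [show 2*(r+s+1) = 2*r+2*s+2 by ring] at this; exact this
  rw [g1, g2, g4]
  linear_combination (-(t^(r+s+c+3)) * (t - t⁻¹)) * (qb2 t hq r s)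
    + (-(t^(r+s+c+3)) * (t - t⁻¹) * (t^(2*c+2)-1)) * (qb1 t hq r s)

/-- The product `∏_{k<T} (1 - t^{2k+2})(1 - t^{2(n-k)})`. -/
def Ptt (t : kk) (n T : ℕ) : kk :=
  ∏ k ∈ Finset.range T, ((1 - t^(2*k+2)) * (1 - t^(2*(n-k))))

lemma Ptt_zero (t : kk) (n : ℕ) : Ptt t n 0 = 1 := by simp [Ptt]

lemma Ptt_succ (t : kk) (n T : ℕ) :
    Ptt t n (T+1) = Ptt t n T * ((1 - t^(2*T+2)) * (1 - t^(2*(n-T)))) :=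
  Finset.prod_range_succ _ _

/-- The coefficients in the expansion of the iterated twisted commutators of `T_i(f_j)`. -/
def cco (t κ : kk) (n T r : ℕ) : kk :=
  (-1:kk)^(n+T+r) * t^((n-r)*(T+1)) * κ^n * (qfact t n)⁻¹ * qbinom t (n-T) r * Ptt t n T

lemma SCstep (t κ : kk) (ht : t ≠ 0) (hq : ∀ k : ℕ, k ≠ 0 → qint t k ≠ 0) (c r s : ℕ) :
    cco t κ (c+r+s+1) (c+1) r
      = cco t κ (c+r+s+1) c (r+1) * (t^(2*s+2*c+2) * (1 - t^(2*r+2)))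
      + cco t κ (c+r+s+1) c r * (t^((c+r+s+1)+2*c+2) * (1 - t^(2*s+2))) := by
  unfold cco
  rw [Ptt_succ, show 2*((c+r+s+1)-c) = 2*r+2*s+2 by omega,
    show (c+r+s+1) - (c+1) = r+s by omega, show (c+r+s+1) - c = r+s+1 by omega,
    show (c+r+s+1) - (r+1) = c+s by omega, show (c+r+s+1) - r = c+s+1 by omega]
  linear_combination ((-1:kk))^((c+r+s+1)+c+r) * κ^(c+r+s+1) * (qfact t (c+r+s+1))⁻¹
    * Ptt t (c+r+s+1) c * t^((c+s)*(c+2)) * redid t ht hq r s c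

lemma SC0 (t κ : kk) (hq : ∀ k : ℕ, k ≠ 0 → qint t k ≠ 0) (r s : ℕ) :
    cco t κ (r+s) 0 r = (-t)^s * (κ^r / qfact t r) * (κ^s / qfact t s) := by
  unfold cco qbinom
  rw [Ptt_zero, Nat.sub_zero, show (r+s) - r = s by omega]
  have h1 := qfact_ne_zero t hq r
  have h2 := qfact_ne_zero t hq s
  have h3 := qfact_ne_zero t hq (r+s)
  rw [neg_pow]
  field_simp
  ring_nf
  rw [show r*2 = 2*r by ring, pow_mul, neg_one_sq, one_pow]
  ring

lemma cco_ne_zero (t κ : kk) (ht : t ≠ 0) (hq : ∀ k : ℕ, k ≠ 0 → qint t k ≠ 0)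
    (hκ : κ ≠ 0) (hpow : ∀ a : ℕ, a ≠ 0 → t ^ a ≠ 1) (n : ℕ) :
    cco t κ n n 0 ≠ 0 := by
  unfold cco
  have hb : qbinom t (n-n) 0 = 1 := by
    simp [qbinom, qfact_zero, Nat.sub_zero]
  rw [hb]
  have hP : Ptt t n n ≠ 0 := by
    unfold Ptt
    rw [Finset.prod_ne_zero_iff]
    intro k hk
    rw [Finset.mem_range] at hk
    apply mul_ne_zero
    · exact sub_ne_zero.mpr (fun h => hpow (2*k+2) (by omega) h.symm)
    · exact sub_ne_zero.mpr (fun h => hpow (2*(n-k)) (by omega) h.symm)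
  apply mul_ne_zero
  apply mul_ne_zero
  apply mul_ne_zero
  apply mul_ne_zero
  apply mul_ne_zero
  · exact pow_ne_zero _ (by norm_num)
  · exact pow_ne_zero _ ht
  · exact pow_ne_zero _ hκ
  · exact inv_ne_zero (qfact_ne_zero t hq n)
  · exact one_ne_zero
  · exact hP

variable {I : Type} [Fintype I] [DecidableEq I]

lemma qi_eq (A : CartanDatum I) (i : I) : qi A i = vv ^ (2 * A.d i) := by
  unfold qi qq
  rw [← zpow_natCast vv 2, ← zpow_mul]
  norm_num

lemma qi_ne_zero (A : CartanDatum I) (i : I) : qi A i ≠ 0 := by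
  rw [qi_eq]; exact zpow_ne_zero _ vv_ne_zero

lemma qi_zpow_inj (A : CartanDatum I) (i : I) (a b : ℤ) (h : qi A i ^ a = qi A i ^ b) :
    a = b := by
  rw [qi_eq, ← zpow_mul, ← zpow_mul] at h
  have := vv_zpow_inj _ _ h
  have hd := A.d_pos i
  have h2 : (2 * A.d i) ≠ 0 := by omega
  exact mul_left_cancel₀ h2 this

lemma qi_pow_ne_one (A : CartanDatum I) (i : I) (a : ℕ) (ha : a ≠ 0) :
    (qi A i) ^ a ≠ 1 := by
  intro h
  have h' : (qi A i) ^ (a:ℤ) = (qi A i) ^ (0:ℤ) := by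
    rw [zpow_natCast, zpow_zero]; exact h
  have := qi_zpow_inj A i _ _ h'
  omega

lemma qint_qi_ne_zero (A : CartanDatum I) (i : I) (k : ℕ) (hk : k ≠ 0) :
    qint (qi A i) k ≠ 0 := by
  intro h
  have ht := qint_telescope (qi A i) (qi_ne_zero A i) k
  rw [h, mul_zero] at ht
  have h' : (qi A i) ^ (k:ℤ) = (qi A i) ^ (-(k:ℤ)) := by
    have := sub_eq_zero.mp ht.symm; exact this
  have := qi_zpow_inj A i _ _ h'
  omega

lemma sqi_ne_zero (A : CartanDatum I) (i : I) : sqi A i ≠ 0 :=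
  zpow_ne_zero _ vv_ne_zero

lemma kap_ne_zero (A : CartanDatum I) (i : I) :
    sqi A i * (1 - qi A i ^ 2)⁻¹ ≠ 0 := by
  apply mul_ne_zero (sqi_ne_zero A i)
  apply inv_ne_zero
  exact sub_ne_zero.mpr (fun h => qi_pow_ne_one A i 2 (by norm_num) h.symm)

lemma form_alpha (A : CartanDatum I) (i j : I) :
    A.form (alphaF i) (alphaF j) = A.d i * A.c i j := by
  unfold CartanDatum.form alphaF
  simp [ite_mul, mul_ite, Finset.sum_ite_eq, Finset.sum_ite_eq']

lemma boson_eq (A : CartanDatum I) (i j : I) (m p : ℤ) (h : m < p) :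
    fgen A i m * fgen A j p =
      (qq ^ ((-1 : ℤ) ^ (p - m + 1).natAbs * A.form (alphaF i) (alphaF j))) •
          (fgen A j p * fgen A i m) +
        (if j = i ∧ p = m + 1 then ((1 : kk) - (qi A i) ^ 2) • (1 : Ahat A) else 0) := by
  have hrel := RingQuot.mkAlgHom_rel kk (AhatRel.boson (A := A) i j m p h)
  unfold fgen
  rw [map_mul] at hrel
  rw [hrel, map_add, map_smul, map_mul]
  congr 1
  split_ifs with hc
  · rw [map_smul, map_one]
  · rw [map_zero]

lemma rel_fh (A : CartanDatum I) (i : I) (m : ℤ) :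
    fgen A i m * fgen A i (m+1) =
      ((qi A i) ^ 2) • (fgen A i (m+1) * fgen A i m) + ((1:kk) - (qi A i) ^ 2) • 1 := by
  have h := boson_eq A i i m (m+1) (by omega)
  have e1 : ((-1 : ℤ) ^ (m + 1 - m + 1).natAbs * A.form (alphaF i) (alphaF i)) = A.d i * 2 := by
    rw [form_alpha, A.c_diag, show m + 1 - m + 1 = (2:ℤ) by ring]
    norm_num
  rw [e1] at h
  have e2 : qq ^ (A.d i * 2) = (qi A i) ^ 2 := by
    unfold qi
    rw [zpow_mul, zpow_two, pow_two]
  rw [e2] at h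
  simpa using h

lemma rel_gh (A : CartanDatum I) (i j : I) (m : ℤ) (hji : j ≠ i) :
    fgen A j m * fgen A i (m+1) =
      ((qi A i) ^ (A.c i j)) • (fgen A i (m+1) * fgen A j m) := by
  have h := boson_eq A j i m (m+1) (by omega)
  have e1 : ((-1 : ℤ) ^ (m + 1 - m + 1).natAbs * A.form (alphaF j) (alphaF i))
      = A.d i * A.c i j := by
    rw [form_alpha, show m + 1 - m + 1 = (2:ℤ) by ring, ← A.symm i j]
    norm_num
  rw [e1] at h
  have e2 : qq ^ (A.d i * A.c i j) = (qi A i) ^ (A.c i j) := by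
    unfold qi
    rw [zpow_mul]
  rw [e2] at h
  have e3 : ¬ (i = j ∧ m + 1 = m + 1) := by
    rintro ⟨hij, -⟩; exact hji hij.symm
  rw [if_neg e3, add_zero] at h
  exact h

lemma L1 (A : CartanDatum I) (i : I) (m : ℤ) (s : ℕ) :
    fgen A i m ^ (s+1) * fgen A i (m+1) =
      ((qi A i) ^ (2*s+2)) • (fgen A i (m+1) * fgen A i m ^ (s+1)) +
        ((1:kk) - (qi A i) ^ (2*s+2)) • fgen A i m ^ s := by
  induction s with
  | zero => simpa using rel_fh A i m
  | succ s ih =>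
    conv_lhs => rw [pow_succ', mul_assoc, ih, mul_add, mul_smul_comm, mul_smul_comm,
      ← mul_assoc, rel_fh A i m, ← pow_succ']
    rw [add_mul, smul_mul_assoc, smul_mul_assoc, one_mul, mul_assoc, ← pow_succ']
    rw [smul_add, smul_smul, smul_smul, add_assoc, ← add_smul]
    congr 1
    · congr 1; ring
    · congr 1; ring

lemma L1' (A : CartanDatum I) (i : I) (m : ℤ) (s : ℕ) :
    fgen A i m ^ s * fgen A i (m+1) =
      ((qi A i) ^ (2*s)) • (fgen A i (m+1) * fgen A i m ^ s) +
        ((1:kk) - (qi A i) ^ (2*s)) • fgen A i m ^ (s-1) := by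
  cases s with
  | zero => simp
  | succ s =>
    have := L1 A i m s
    rw [show 2*(s+1) = 2*s+2 by ring, show s+1-1 = s by omega]
    exact this

lemma L2 (A : CartanDatum I) (i j : I) (m : ℤ) (hji : j ≠ i) (r s : ℕ) :
    (fgen A i m ^ r * fgen A j m * fgen A i m ^ s) * fgen A i (m+1) =
      ((qi A i) ^ (2*(r+s)) * (qi A i) ^ (A.c i j)) •
          (fgen A i (m+1) * (fgen A i m ^ r * fgen A j m * fgen A i m ^ s)) +
        ((qi A i) ^ (A.c i j) * (qi A i) ^ (2*s) * ((1:kk) - (qi A i) ^ (2*r))) •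
          (fgen A i m ^ (r-1) * fgen A j m * fgen A i m ^ s) +
        ((1:kk) - (qi A i) ^ (2*s)) •
          (fgen A i m ^ r * fgen A j m * fgen A i m ^ (s-1)) := by
  conv_lhs => rw [mul_assoc, L1' A i m s, mul_add, mul_smul_comm, mul_smul_comm,
    ← mul_assoc, mul_assoc (fgen A i m ^ r) (fgen A j m) (fgen A i (m+1)),
    rel_gh A i j m hji, mul_smul_comm, smul_mul_assoc,
    ← mul_assoc (fgen A i m ^ r) (fgen A i (m+1)) (fgen A j m),
    L1' A i m r]
  simp only [add_mul, smul_mul_assoc, smul_add, smul_smul, mul_assoc]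
  congr 1
  congr 1
  · congr 1; ring
  · congr 1; ring

/-- The iterated twisted commutator sequence starting from `T(f_{j,m})`. -/
def thet (A : CartanDatum I) (i j : I) (m : ℤ) (T : Ahat A ≃ₐ[kk] Ahat A) : ℕ → Ahat A
  | 0 => T (fgen A j m)
  | t+1 => ((qi A i) ^ ((-A.c i j).toNat + 2*t + 2)) •
      (thet A i j m T t * fgen A i (m+1)
        - ((qi A i) ^ (2*((-A.c i j).toNat - t)) * (qi A i) ^ (A.c i j)) •
          (fgen A i (m+1) * thet A i j m T t))

lemma thet_zero (A : CartanDatum I) (i j : I) (m : ℤ) (T : Ahat A ≃ₐ[kk] Ahat A) :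
    thet A i j m T 0 = T (fgen A j m) := rfl

lemma thet_succ (A : CartanDatum I) (i j : I) (m : ℤ) (T : Ahat A ≃ₐ[kk] Ahat A) (t : ℕ) :
    thet A i j m T (t+1) = ((qi A i) ^ ((-A.c i j).toNat + 2*t + 2)) •
      (thet A i j m T t * fgen A i (m+1)
        - ((qi A i) ^ (2*((-A.c i j).toNat - t)) * (qi A i) ^ (A.c i j)) •
          (fgen A i (m+1) * thet A i j m T t)) := rfl

lemma INV (A : CartanDatum I) (i j : I) (m : ℤ) (hji : j ≠ i)
    (T : Ahat A ≃ₐ[kk] Ahat A) (hT : IsBraidT A i T) :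
    ∀ t, t ≤ (-A.c i j).toNat → thet A i j m T t =
      ∑ r ∈ Finset.range ((-A.c i j).toNat - t + 1),
        cco (qi A i) (sqi A i * (1 - qi A i ^ 2)⁻¹) ((-A.c i j).toNat) t r •
          (fgen A i m ^ r * fgen A j m * fgen A i m ^ ((-A.c i j).toNat - t - r)) := by
  intro t
  induction t with
  | zero =>
    intro _
    rw [thet_zero, hT.2 j hji m]
    simp only [Nat.sub_zero]
    apply Finset.sum_congr rfl
    intro r hr
    rw [Finset.mem_range] at hr
    obtain ⟨s, hs⟩ : ∃ s, (-A.c i j).toNat = r + s := ⟨(-A.c i j).toNat - r, by omega⟩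
    rw [hs, show r + s - r = s by omega]
    unfold Fdiv
    rw [SC0 (qi A i) (sqi A i * (1 - qi A i ^ 2)⁻¹) (qint_qi_ne_zero A i) r s]
    simp only [smul_mul_assoc, mul_smul_comm, smul_smul]
    congr 1
    ring
  | succ t ih =>
    intro ht1
    have ht : t ≤ (-A.c i j).toNat := by omega
    specialize ih ht
    obtain ⟨N, hN⟩ : ∃ N, (-A.c i j).toNat - t = N + 1 := ⟨(-A.c i j).toNat - t - 1, by omega⟩
    rw [thet_succ, ih, hN, show (-A.c i j).toNat - (t+1) = N by omega]
    have hw := qi_ne_zero A i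
    set w := qi A i with hwdef
    set κ := sqi A i * (1 - qi A i ^ 2)⁻¹ with hκdef
    set n := (-A.c i j).toNat with hndef
    set F := fgen A i m with hF
    set G := fgen A j m with hG
    set H := fgen A i (m+1) with hH
    set Q := (qi A i) ^ (A.c i j) with hQ
    have eSH : (∑ r ∈ Finset.range (N+2), cco w κ n t r • (F^r * G * F^(N+1-r))) * H =
        ∑ r ∈ Finset.range (N+2),
          ((cco w κ n t r * (w^(2*(N+1))*Q)) • (H * (F^r * G * F^(N+1-r))) +
           (cco w κ n t r * (Q * w^(2*(N+1-r)) * ((1:kk) - w^(2*r)))) •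
             (F^(r-1) * G * F^(N+1-r)) +
           (cco w κ n t r * ((1:kk) - w^(2*(N+1-r)))) • (F^r * G * F^(N+1-r-1))) := by
      rw [Finset.sum_mul]
      apply Finset.sum_congr rfl
      intro r hr
      rw [Finset.mem_range] at hr
      rw [smul_mul_assoc, L2 A i j m hji r (N+1-r), show 2*(r+(N+1-r)) = 2*(N+1) by omega]
      rw [smul_add, smul_add, smul_smul, smul_smul, smul_smul]
    have eHS : (w^(2*(N+1))*Q) • (H * (∑ r ∈ Finset.range (N+2),
          cco w κ n t r • (F^r * G * F^(N+1-r)))) =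
        ∑ r ∈ Finset.range (N+2),
          (cco w κ n t r * (w^(2*(N+1))*Q)) • (H * (F^r * G * F^(N+1-r))) := by
      rw [Finset.mul_sum, Finset.smul_sum]
      apply Finset.sum_congr rfl
      intro r hr
      rw [mul_smul_comm, smul_comm, smul_smul]
    rw [eSH, eHS, Finset.sum_add_distrib, Finset.sum_add_distrib]
    have cancel : ∀ a b c : Ahat A, a + b + c - a = b + c := by intro a b c; abel
    rw [cancel]
    have eB : ∑ r ∈ Finset.range (N+2),
        (cco w κ n t r * (Q * w^(2*(N+1-r)) * ((1:kk) - w^(2*r)))) • (F^(r-1) * G * F^(N+1-r)) =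
        ∑ r ∈ Finset.range (N+1),
        (cco w κ n t (r+1) * (Q * w^(2*(N-r)) * ((1:kk) - w^(2*r+2)))) • (F^r * G * F^(N-r)) := by
      rw [Finset.sum_range_succ']
      have h0 : (cco w κ n t 0 * (Q * w^(2*(N+1-0)) * ((1:kk) - w^(2*0)))) •
          (F^(0-1) * G * F^(N+1-0)) = 0 := by
        norm_num
      rw [h0, add_zero]
      apply Finset.sum_congr rfl
      intro r hr
      rw [show (r+1) - 1 = r by omega, show N+1-(r+1) = N-r by omega,
        show 2*(r+1) = 2*r+2 by ring]
    have eC : ∑ r ∈ Finset.range (N+2),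
        (cco w κ n t r * ((1:kk) - w^(2*(N+1-r)))) • (F^r * G * F^(N+1-r-1)) =
        ∑ r ∈ Finset.range (N+1),
        (cco w κ n t r * ((1:kk) - w^(2*(N+1-r)))) • (F^r * G * F^(N-r)) := by
      rw [Finset.sum_range_succ]
      have h0 : (cco w κ n t (N+1) * ((1:kk) - w^(2*(N+1-(N+1))))) •
          (F^(N+1) * G * F^(N+1-(N+1)-1)) = 0 := by
        norm_num
      rw [h0, add_zero]
      apply Finset.sum_congr rfl
      intro r hr
      rw [Finset.mem_range] at hr
      rw [show N+1-r-1 = N-r by omega]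
    rw [eB, eC, ← Finset.sum_add_distrib, Finset.smul_sum]
    apply Finset.sum_congr rfl
    intro r hr
    rw [Finset.mem_range] at hr
    obtain ⟨s, hs⟩ : ∃ s, N = r + s := ⟨N - r, by omega⟩
    have hn : n = t + r + s + 1 := by omega
    rw [← add_smul, smul_smul, hs, show r+s-r = s by omega, show r+s+1-r = s+1 by omega, hn]
    rw [SCstep w κ hw (qint_qi_ne_zero A i) t r s]
    congr 1
    have hcn : ((n:ℕ):ℤ) = -A.c i j := Int.toNat_of_nonneg (by
      have := A.c_offdiag i j (Ne.symm hji); omega)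
    have hc2 : A.c i j = -((t:ℤ)+r+s+1) := by
      rw [hn] at hcn; push_cast at hcn; omega
    rw [hQ, hc2]
    have key : (w:kk)^((t+r+s+1)+2*t+2 : ℕ) * w^(-((t:ℤ)+r+s+1)) = w^(2*t+2 : ℕ) := by
      rw [← zpow_natCast w ((t+r+s+1)+2*t+2), ← zpow_natCast w (2*t+2), ← zpow_add₀ hw]
      congr 1; push_cast; ring
    linear_combination (cco w κ (t+r+s+1) t (r+1) * w^(2*s) * ((1:kk) - w^(2*r+2))) * key

lemma thet_final (A : CartanDatum I) (i j : I) (m : ℤ) (hji : j ≠ i)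
    (T : Ahat A ≃ₐ[kk] Ahat A) (hT : IsBraidT A i T) :
    thet A i j m T ((-A.c i j).toNat) =
      cco (qi A i) (sqi A i * (1 - qi A i ^ 2)⁻¹) ((-A.c i j).toNat) ((-A.c i j).toNat) 0 •
        fgen A j m := by
  rw [INV A i j m hji T hT _ le_rfl, Nat.sub_self, Finset.sum_range_one]
  norm_num

lemma lam_ne_zero (A : CartanDatum I) (i j : I) :
    cco (qi A i) (sqi A i * (1 - qi A i ^ 2)⁻¹) ((-A.c i j).toNat) ((-A.c i j).toNat) 0 ≠ 0 :=
  cco_ne_zero _ _ (qi_ne_zero A i) (qint_qi_ne_zero A i) (kap_ne_zero A i)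
    (qi_pow_ne_one A i) _

/-- The generating set of the right-hand side of Statement 11. -/
def MSet (A : CartanDatum I) (i : I) : Set (Ahat A) :=
  {y : Ahat A | ∃ k : ℕ, ∃ x ∈ (subLT A 0 : Set (Ahat A)), y = fgen A i 0 ^ k * x}

lemma subLT_gen_mem (A : CartanDatum I) (j : I) (m : ℤ) (hm : m < 0) :
    fgen A j m ∈ subLT A 0 :=
  Algebra.subset_adjoin ⟨j, m, hm, rfl⟩

lemma subLT_le_MS (A : CartanDatum I) (i : I) :
    ∀ x ∈ subLT A 0, x ∈ Submodule.span kk (MSet A i) := fun x hx =>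
  Submodule.subset_span ⟨0, x, hx, by rw [pow_zero, one_mul]⟩

lemma pow_mem_MS (A : CartanDatum I) (i : I) (k : ℕ) :
    fgen A i 0 ^ k ∈ Submodule.span kk (MSet A i) :=
  Submodule.subset_span ⟨k, 1, one_mem _, (mul_one _).symm⟩

lemma fmul_MS (A : CartanDatum I) (i : I) :
    ∀ y ∈ Submodule.span kk (MSet A i), fgen A i 0 * y ∈ Submodule.span kk (MSet A i) := by
  intro y hy
  induction hy using Submodule.span_induction with
  | mem y hy =>
    obtain ⟨k, x, hx, rfl⟩ := hy
    exact Submodule.subset_span ⟨k+1, x, hx, by rw [← mul_assoc, ← pow_succ']⟩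
  | zero => rw [mul_zero]; exact zero_mem _
  | add a b _ _ ha hb => rw [mul_add]; exact add_mem ha hb
  | smul a x _ hx => rw [mul_smul_comm]; exact Submodule.smul_mem _ _ hx

lemma fpow_mul_MS (A : CartanDatum I) (i : I) (k : ℕ) :
    ∀ y ∈ Submodule.span kk (MSet A i), fgen A i 0 ^ k * y ∈ Submodule.span kk (MSet A i) := by
  induction k with
  | zero => intro y hy; rw [pow_zero, one_mul]; exact hy
  | succ k ih =>
    intro y hy
    rw [pow_succ', mul_assoc]
    exact fmul_MS A i _ (ih _ hy)

lemma MS_mul_subLT (A : CartanDatum I) (i : I) :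
    ∀ y ∈ Submodule.span kk (MSet A i), ∀ z ∈ subLT A 0,
      y * z ∈ Submodule.span kk (MSet A i) := by
  intro y hy
  induction hy using Submodule.span_induction with
  | mem y hy =>
    intro z hz
    obtain ⟨k, x, hx, rfl⟩ := hy
    exact Submodule.subset_span ⟨k, x * z, mul_mem hx hz, by rw [mul_assoc]⟩
  | zero => intro z _; rw [zero_mul]; exact zero_mem _
  | add a b _ _ ha hb => intro z hz; rw [add_mul]; exact add_mem (ha z hz) (hb z hz)
  | smul a x _ hx => intro z hz; rw [smul_mul_assoc]; exact Submodule.smul_mem _ _ (hx z hz)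

lemma mul_MS_of_pows (A : CartanDatum I) (i : I) (a : Ahat A)
    (ha : ∀ l : ℕ, a * fgen A i 0 ^ l ∈ Submodule.span kk (MSet A i)) :
    ∀ v ∈ Submodule.span kk (MSet A i), a * v ∈ Submodule.span kk (MSet A i) := by
  intro v hv
  induction hv using Submodule.span_induction with
  | mem v hv =>
    obtain ⟨l, z, hz, rfl⟩ := hv
    rw [← mul_assoc]
    exact MS_mul_subLT A i _ (ha l) z hz
  | zero => rw [mul_zero]; exact zero_mem _
  | add u v _ _ hu hv => rw [mul_add]; exact add_mem hu hv
  | smul c y _ hy => rw [mul_smul_comm]; exact Submodule.smul_mem _ _ hy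

lemma subLT_mul_fpow (A : CartanDatum I) (i : I) :
    ∀ x ∈ subLT A 0, ∀ k : ℕ, x * fgen A i 0 ^ k ∈ Submodule.span kk (MSet A i) := by
  intro x hx
  induction hx using Algebra.adjoin_induction with
  | mem x hxg =>
    obtain ⟨j', m', hm', rfl⟩ := hxg
    intro k
    induction k with
    | zero => rw [pow_zero, mul_one]; exact subLT_le_MS A i _ (subLT_gen_mem A j' m' hm')
    | succ k ihk =>
      rw [pow_succ', ← mul_assoc, boson_eq A j' i m' 0 hm', add_mul, smul_mul_assoc,
        mul_assoc]
      apply add_mem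
      · exact Submodule.smul_mem _ _ (fmul_MS A i _ ihk)
      · split_ifs with hc
        · rw [smul_mul_assoc, one_mul]
          exact Submodule.smul_mem _ _ (pow_mem_MS A i k)
        · rw [zero_mul]; exact zero_mem _
  | algebraMap r =>
    intro k
    rw [← Algebra.smul_def]
    exact Submodule.smul_mem _ _ (pow_mem_MS A i k)
  | add a b _ _ ha hb => intro k; rw [add_mul]; exact add_mem (ha k) (hb k)
  | mul a b _ _ ha hb =>
    intro k
    rw [mul_assoc]
    exact mul_MS_of_pows A i a ha _ (hb k)

lemma subLT_mul_MS (A : CartanDatum I) (i : I) :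
    ∀ x ∈ subLT A 0, ∀ v ∈ Submodule.span kk (MSet A i),
      x * v ∈ Submodule.span kk (MSet A i) :=
  fun x hx => mul_MS_of_pows A i x (subLT_mul_fpow A i x hx)

lemma MS_mul_MS (A : CartanDatum I) (i : I) :
    ∀ a ∈ Submodule.span kk (MSet A i), ∀ b ∈ Submodule.span kk (MSet A i),
      a * b ∈ Submodule.span kk (MSet A i) := by
  intro a ha
  induction ha using Submodule.span_induction with
  | mem a hag =>
    intro b hb
    obtain ⟨k, x, hx, rfl⟩ := hag
    rw [mul_assoc]
    exact fpow_mul_MS A i k _ (subLT_mul_MS A i x hx b hb)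
  | zero => intro b _; rw [zero_mul]; exact zero_mem _
  | add u v _ _ hu hv => intro b hb; rw [add_mul]; exact add_mem (hu b hb) (hv b hb)
  | smul a y _ hy => intro b hb; rw [smul_mul_assoc]; exact Submodule.smul_mem _ _ (hy b hb)

lemma fwd_mem (A : CartanDatum I) (i : I) (T : Ahat A ≃ₐ[kk] Ahat A) (hT : IsBraidT A i T) :
    ∀ x ∈ subLT A 0, T x ∈ Submodule.span kk (MSet A i) := by
  intro x hx
  induction hx using Algebra.adjoin_induction with
  | mem x hxg =>
    obtain ⟨j', m', hm', rfl⟩ := hxg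
    by_cases hji : j' = i
    · subst hji
      rw [hT.1 m']
      rcases lt_or_eq_of_le (show m' + 1 ≤ 0 by omega) with h1 | h1
      · exact subLT_le_MS A j' _ (subLT_gen_mem A j' (m'+1) h1)
      · rw [h1]
        exact Submodule.subset_span ⟨1, 1, one_mem _, by rw [pow_one, mul_one]⟩
    · rw [hT.2 j' hji m']
      apply subLT_le_MS A i
      apply Subalgebra.sum_mem
      intro r _
      apply Subalgebra.smul_mem
      unfold Fdiv
      apply mul_mem
      apply mul_mem
      · exact Subalgebra.smul_mem _ (pow_mem (subLT_gen_mem A i m' hm') r) _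
      · exact subLT_gen_mem A j' m' hm'
      · exact Subalgebra.smul_mem _ (pow_mem (subLT_gen_mem A i m' hm') _) _
  | algebraMap r =>
    rw [AlgEquiv.commutes]
    exact subLT_le_MS A i _ (algebraMap_mem _ r)
  | add a b _ _ ha hb => rw [map_add]; exact add_mem ha hb
  | mul a b _ _ ha hb => rw [map_mul]; exact MS_mul_MS A i _ ha _ hb

lemma subLT_le_map (A : CartanDatum I) (i : I) (T : Ahat A ≃ₐ[kk] Ahat A)
    (hT : IsBraidT A i T) :
    subLT A 0 ≤ (subLT A 0).map T.toAlgHom := by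
  apply Algebra.adjoin_le
  rintro x ⟨j', m', hm', rfl⟩
  by_cases hji : j' = i
  · subst hji
    refine ⟨fgen A j' (m'-1), subLT_gen_mem A j' (m'-1) (by omega), ?_⟩
    show T (fgen A j' (m'-1)) = fgen A j' m'
    rw [hT.1 (m'-1)]
    norm_num
  · have hH : fgen A i (m'+1) ∈ (subLT A 0).map T.toAlgHom := by
      refine ⟨fgen A i m', subLT_gen_mem A i m' hm', ?_⟩
      exact hT.1 m'
    have hθ : ∀ t, thet A i j' m' T t ∈ (subLT A 0).map T.toAlgHom := by
      intro t
      induction t with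
      | zero =>
        exact ⟨fgen A j' m', subLT_gen_mem A j' m' hm', rfl⟩
      | succ t ih =>
        rw [thet_succ]
        exact Subalgebra.smul_mem _
          (sub_mem (mul_mem ih hH) (Subalgebra.smul_mem _ (mul_mem hH ih) _)) _
    have hfin := thet_final A i j' m' hji T hT
    have hmem := hθ ((-A.c i j').toNat)
    rw [hfin] at hmem
    have := Subalgebra.smul_mem _ hmem
      (cco (qi A i) (sqi A i * (1 - qi A i ^ 2)⁻¹) ((-A.c i j').toNat) ((-A.c i j').toNat) 0)⁻¹
    rwa [inv_smul_smul₀ (lam_ne_zero A i j')] at this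

lemma rev_incl (A : CartanDatum I) (i : I) (T : Ahat A ≃ₐ[kk] Ahat A)
    (hT : IsBraidT A i T) :
    Submodule.span kk (MSet A i) ≤ Subalgebra.toSubmodule ((subLT A 0).map T.toAlgHom) := by
  rw [Submodule.span_le]
  rintro y ⟨k, x, hx, rfl⟩
  have hf0 : fgen A i 0 ∈ (subLT A 0).map T.toAlgHom := by
    refine ⟨fgen A i (-1), subLT_gen_mem A i (-1) (by omega), ?_⟩
    show T (fgen A i (-1)) = fgen A i 0
    rw [hT.1 (-1)]
    norm_num
  simp only [SetLike.mem_coe, Subalgebra.mem_toSubmodule]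
  exact mul_mem (pow_mem hf0 k) (subLT_le_map A i T hT hx)

end Statement11Aux

/-- For every `i ∈ I`,
`T_i(Â_{<0}) = Σ_{k ≥ 0} f_{i,0}^k · Â_{<0}`. -/
theorem statement11 {I : Type} [Fintype I] [DecidableEq I] (A : CartanDatum I) (i : I)
    (T : Ahat A ≃ₐ[kk] Ahat A) (hT : IsBraidT A i T) :
    ⇑T '' (subLT A 0 : Set (Ahat A)) =
      (Submodule.span kk
        {y : Ahat A | ∃ k : ℕ, ∃ x ∈ (subLT A 0 : Set (Ahat A)),
          y = fgen A i 0 ^ k * x} : Set (Ahat A)) := by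
  apply Set.Subset.antisymm
  · rintro _ ⟨x, hx, rfl⟩
    exact fwd_mem A i T hT x hx
  · intro y hy
    have hy' : y ∈ Submodule.span kk (MSet A i) := hy
    have hmem := (Subalgebra.mem_toSubmodule _).mp (rev_incl A i T hT hy')
    obtain ⟨x, hx, hxy⟩ := Subalgebra.mem_map.mp hmem
    exact ⟨x, hx, hxy⟩
end
end
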